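/- arXiv:2308.05293 — 8 statements merged into one kernel-verified Lean document; each statement's English description precedes it below -/
import Mathlib

section
/- Let G be a finite connected 2-edge-connected simple graph, and let P be a vertex of G. Then there is no vertex Q ≠ P such that the divisors P and Q are linearly equivalent (i.e., there is no f : V(G) → ℤ with P − Q equal to the Laplacian divisor Δ(f)). -/
open scoped Classical

namespace GraphDiv

variable {V : Type*}

/-- The Laplacian divisor of an integer-valued function on the vertices. -/
noncomputable def lap (G : SimpleGraph V) [Fintype V] (f : V → ℤ) : V → ℤ :=
  fun P => ∑ Q : V, if G.Adj P Q then f P - f Q else 0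

/-- Linear equivalence of divisors: `D ∼ D'` iff `D - D' = Δ(f)` for some `f`. -/
def LinEquiv (G : SimpleGraph V) [Fintype V] (D D' : V → ℤ) : Prop :=
  ∃ f : V → ℤ, D - D' = lap G f

/-- A divisor is effective if all its coefficients are nonnegative. -/
def Effective (D : V → ℤ) : Prop := ∀ P, 0 ≤ D P

/-- The degree of a divisor. -/
def degDiv [Fintype V] (D : V → ℤ) : ℤ := ∑ P : V, D P

/-- The complete linear system of a divisor. -/
def linSys (G : SimpleGraph V) [Fintype V] (D : V → ℤ) : Set (V → ℤ) :=
  {E | Effective E ∧ LinEquiv G E D}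

/-- `RankEq G D r` says the Baker–Norine rank of `D` equals `r`. -/
def RankEq (G : SimpleGraph V) [Fintype V] (D : V → ℤ) (r : ℤ) : Prop :=
  -1 ≤ r ∧
  (∀ E : V → ℤ, Effective E → degDiv E ≤ r → (linSys G (D - E)).Nonempty) ∧
  ∃ E : V → ℤ, Effective E ∧ degDiv E = r + 1 ∧ linSys G (D - E) = ∅

/-- The divisor consisting of a single vertex. -/
noncomputable def unit (P : V) : V → ℤ := fun Q => if Q = P then 1 else 0

/-- A graph is 2-edge-connected if it is connected and stays connected
after removing any single edge. -/
def TwoEdgeConnected (G : SimpleGraph V) : Prop :=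
  G.Connected ∧ ∀ v w : V, G.Adj v w → (G.deleteEdges {s(v, w)}).Connected

/-- Action of a graph automorphism on divisors. -/
def divAct {G : SimpleGraph V} (σ : G ≃g G) (D : V → ℤ) : V → ℤ :=
  fun v => D (σ.symm v)

/-- Two vertices lie in the same orbit of a subgroup of automorphisms. -/
def vrel {G : SimpleGraph V} (H : Subgroup (G ≃g G)) (v w : V) : Prop :=
  ∃ σ ∈ H, σ v = w

/-- An edge is collapsed in the quotient: its endpoints lie in the same vertex orbit. -/
def Collapsed {G : SimpleGraph V} (H : Subgroup (G ≃g G)) (e : Sym2 V) : Prop :=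
  ∃ a b : V, e = s(a, b) ∧ vrel H a b

/-- The quotient morphism `G → G/H` is harmonic: for every vertex `P`, the number of
edges at `P` lying above a given non-collapsed edge-orbit incident to the class of `P`
is independent of the choice of that edge-orbit. -/
def QuotHarmonic (G : SimpleGraph V) (H : Subgroup (G ≃g G)) : Prop :=
  ∀ (P : V) (e₁ e₂ : Sym2 V), e₁ ∈ G.edgeSet → e₂ ∈ G.edgeSet →
    (∃ σ ∈ H, P ∈ Sym2.map (⇑σ) e₁) → (∃ σ ∈ H, P ∈ Sym2.map (⇑σ) e₂) →
    ¬ Collapsed H e₁ → ¬ Collapsed H e₂ →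
    Nat.card {e : Sym2 V // e ∈ G.edgeSet ∧ P ∈ e ∧ ∃ σ ∈ H, Sym2.map (⇑σ) e = e₁} =
    Nat.card {e : Sym2 V // e ∈ G.edgeSet ∧ P ∈ e ∧ ∃ σ ∈ H, Sym2.map (⇑σ) e = e₂}

/-- `H` acts harmonically on `G`: for every subgroup `Δ ≤ H` the quotient morphism
`G → G/Δ` is harmonic. -/
def HarmonicAction (G : SimpleGraph V) (H : Subgroup (G ≃g G)) : Prop :=
  ∀ Δ : Subgroup (G ≃g G), Δ ≤ H → QuotHarmonic G Δ

/-- `P` is a Galois point with respect to `|D|`. -/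
def IsGaloisPoint (G : SimpleGraph V) [Fintype V] (D : V → ℤ) (P : V) : Prop :=
  RankEq G (D - unit P) 1 ∧
  (∀ Q : V, RankEq G (D - unit P - unit Q) 0) ∧
  ∃ H : Subgroup (G ≃g G), (Nat.card H : ℤ) = degDiv D - 1 ∧
    (∃ v w : V, ¬ vrel H v w) ∧
    HarmonicAction G H ∧
    ∃ E₁ E₂ : V → ℤ, E₁ ≠ E₂ ∧ E₁ ∈ linSys G (D - unit P) ∧ E₂ ∈ linSys G (D - unit P) ∧
      ∀ σ ∈ H, divAct σ E₁ = E₁ ∧ divAct σ E₂ = E₂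

/-- A divisor is `q`-reduced. -/
def QReduced (G : SimpleGraph V) [Fintype V] (q : V) (D : V → ℤ) : Prop :=
  (∀ P : V, P ≠ q → 0 ≤ D P) ∧
  ∀ S : Finset V, S.Nonempty → q ∉ S →
    ∃ P ∈ S, D P < (((G.neighborFinset P).filter (fun Q => Q ∉ S)).card : ℤ)

/-- The wheel graph on `m + 1` vertices: hub `none` and rim `some i` for `i : Fin m`,
with the rim a cycle via `i ↦ i + 1 (mod m)`. -/
def wheel (m : ℕ) : SimpleGraph (Option (Fin m)) where
  Adj v w :=
    match v, w with
    | none, none => False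
    | none, some _ => True
    | some _, none => True
    | some i, some j => i ≠ j ∧ ((i.val + 1) % m = j.val ∨ (j.val + 1) % m = i.val)
  symm := by
    constructor
    intro v w h
    cases v <;> cases w <;> simp_all <;> tauto
  loopless := by constructor; intro v; cases v <;> simp

/-- The 4-cycle `P₁P₂P₃P₄` with the chord `P₁P₃` (vertices `0,1,2,3`). -/
def g4 : SimpleGraph (Fin 4) :=
  SimpleGraph.fromRel (fun v w =>
    (v = 0 ∧ w = 1) ∨ (v = 1 ∧ w = 2) ∨ (v = 2 ∧ w = 3) ∨ (v = 3 ∧ w = 0) ∨ (v = 0 ∧ w = 2))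

end GraphDiv


open GraphDiv in
/-- In a 2-edge-connected graph, no two distinct vertices are linearly
equivalent as divisors. -/
theorem stmt0 {V : Type*} [Fintype V] (G : SimpleGraph V)
    (h2 : TwoEdgeConnected G) (P : V) :
    ¬ ∃ Q : V, Q ≠ P ∧ LinEquiv G (unit P) (unit Q) := by
  classical
  rintro ⟨Q, hQP, f, hf⟩
  obtain ⟨v₀, -, hmax⟩ := Finset.exists_max_image (Finset.univ : Finset V) f
    ⟨P, Finset.mem_univ P⟩
  set S : Finset V := Finset.univ.filter (fun x => f x = f v₀) with hS
  have hSmem : ∀ x, x ∈ S ↔ f x = f v₀ := by intro x; simp [hS]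
  have hv₀S : v₀ ∈ S := by simp [hSmem]
  have hgap : ∀ x ∈ S, ∀ y ∉ S, 1 ≤ f x - f y := by
    intro x hx y hy
    have hx' := (hSmem x).1 hx
    have hy' : f y ≠ f v₀ := fun h => hy ((hSmem y).2 h)
    have := hmax y (Finset.mem_univ y)
    omega
  have hpt : ∀ v, unit P v - unit Q v = lap G f v := by
    intro v; have := congrFun hf v; simpa using this
  set C : Finset (V × V) := (S ×ˢ Sᶜ).filter (fun p => G.Adj p.1 p.2) with hC
  -- the part of the Laplacian sum inside S vanishes
  have hzero : ∑ v ∈ S, ∑ w ∈ S, (if G.Adj v w then f v - f w else 0) = 0 := by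
    have hswap : ∑ v ∈ S, ∑ w ∈ S, (if G.Adj v w then f v - f w else 0)
        = ∑ v ∈ S, ∑ w ∈ S, (if G.Adj w v then f w - f v else 0) := Finset.sum_comm
    have hneg : ∀ v w : V, (if G.Adj w v then f w - f v else 0)
        = -(if G.Adj v w then f v - f w else 0) := by
      intro v w
      by_cases h : G.Adj v w
      · simp [h, h.symm]
      · have h' : ¬ G.Adj w v := fun hh => h hh.symm
        simp [h, h']
    have : ∑ v ∈ S, ∑ w ∈ S, (if G.Adj v w then f v - f w else 0)
        = -∑ v ∈ S, ∑ w ∈ S, (if G.Adj v w then f v - f w else 0) :=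
      calc ∑ v ∈ S, ∑ w ∈ S, (if G.Adj v w then f v - f w else 0)
          = ∑ v ∈ S, ∑ w ∈ S, (if G.Adj w v then f w - f v else 0) := hswap
        _ = ∑ v ∈ S, ∑ w ∈ S, -(if G.Adj v w then f v - f w else 0) :=
            Finset.sum_congr rfl fun v _ => Finset.sum_congr rfl fun w _ => hneg v w
        _ = -∑ v ∈ S, ∑ w ∈ S, (if G.Adj v w then f v - f w else 0) := by
            simp only [Finset.sum_neg_distrib]
    omega
  -- main sum computation
  have hsplit : ∑ v ∈ S, lap G f v
      = ∑ v ∈ S, ∑ w ∈ Sᶜ, (if G.Adj v w then f v - f w else 0) := by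
    have : ∀ v : V, lap G f v
        = (∑ w ∈ S, (if G.Adj v w then f v - f w else 0))
          + ∑ w ∈ Sᶜ, (if G.Adj v w then f v - f w else 0) := by
      intro v
      rw [lap, Finset.sum_add_sum_compl]
    simp only [this, Finset.sum_add_distrib, hzero, zero_add]
  have hcard : (C.card : ℤ) ≤ ∑ v ∈ S, ∑ w ∈ Sᶜ, (if G.Adj v w then f v - f w else 0) := by
    have h1 : ∑ v ∈ S, ∑ w ∈ Sᶜ, (if G.Adj v w then (1 : ℤ) else 0)
        ≤ ∑ v ∈ S, ∑ w ∈ Sᶜ, (if G.Adj v w then f v - f w else 0) := by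
      refine Finset.sum_le_sum fun v hv => Finset.sum_le_sum fun w hw => ?_
      by_cases h : G.Adj v w
      · simpa [h] using hgap v hv w (by simpa using hw)
      · simp [h]
    have h2 : ∑ v ∈ S, ∑ w ∈ Sᶜ, (if G.Adj v w then (1 : ℤ) else 0) = (C.card : ℤ) := by
      rw [hC, ← Finset.sum_product']
      simp [Finset.sum_ite, Finset.filter_filter]
    omega
  have hle1 : ∑ v ∈ S, (unit P v - unit Q v) ≤ 1 := by
    rw [Finset.sum_sub_distrib]
    have h1 : ∑ v ∈ S, unit P v ≤ 1 := by
      have : ∑ v ∈ S, unit P v = if P ∈ S then 1 else 0 := by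
        simp [unit, Finset.sum_ite_eq']
      rw [this]; split <;> omega
    have h2 : (0 : ℤ) ≤ ∑ v ∈ S, unit Q v := by
      refine Finset.sum_nonneg fun v _ => ?_
      unfold unit
      split <;> omega
    omega
  have hCle : (C.card : ℤ) ≤ 1 := by
    calc (C.card : ℤ) ≤ ∑ v ∈ S, ∑ w ∈ Sᶜ, (if G.Adj v w then f v - f w else 0) := hcard
    _ = ∑ v ∈ S, lap G f v := hsplit.symm
    _ = ∑ v ∈ S, (unit P v - unit Q v) := Finset.sum_congr rfl fun v _ => (hpt v).symm
    _ ≤ 1 := hle1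
  by_cases hcompl : Sᶜ = (∅ : Finset V)
  · -- f is constant, so lap f = 0, so P = Q, contradiction
    have hall : ∀ x : V, f x = f v₀ := by
      intro x
      have : x ∈ S := by
        by_contra hx
        exact (Finset.eq_empty_iff_forall_notMem.1 hcompl x) (Finset.mem_compl.2 hx)
      exact (hSmem x).1 this
    have : lap G f Q = 0 := by
      rw [lap]
      refine Finset.sum_eq_zero fun w _ => ?_
      rw [hall Q, hall w]
      simp
    have hq := hpt Q
    rw [this] at hq
    simp [unit, hQP] at hq
  · obtain ⟨w₁, hw₁⟩ := Finset.nonempty_iff_ne_empty.2 hcompl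
    have hw₁' : w₁ ∉ S := Finset.mem_compl.1 hw₁
    -- there is a crossing edge by connectedness
    obtain ⟨p⟩ := (h2.1.preconnected v₀ w₁ : G.Reachable v₀ w₁)
    obtain ⟨d, -, hd1, hd2⟩ := p.exists_boundary_dart (↑S : Set V)
      (by simpa using hv₀S) (by simpa using hw₁')
    have hdC : (d.fst, d.snd) ∈ C := by
      rw [hC]
      refine Finset.mem_filter.2 ⟨Finset.mem_product.2 ⟨by simpa using hd1,
        Finset.mem_compl.2 (by simpa using hd2)⟩, d.adj⟩
    have hC1 : C.card = 1 := by
      have : 1 ≤ C.card := Finset.card_pos.2 ⟨_, hdC⟩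
      omega
    obtain ⟨a, ha⟩ := Finset.card_eq_one.1 hC1
    have haC : a ∈ C := ha ▸ Finset.mem_singleton_self a
    have haS : a.1 ∈ S := (Finset.mem_product.1 (Finset.mem_filter.1 haC).1).1
    have haS' : a.2 ∉ S := Finset.mem_compl.1
      (Finset.mem_product.1 (Finset.mem_filter.1 haC).1).2
    have hadj : G.Adj a.1 a.2 := (Finset.mem_filter.1 haC).2
    -- deleting this edge keeps the graph connected
    obtain ⟨q⟩ := ((h2.2 a.1 a.2 hadj).preconnected a.1 a.2 :
      (G.deleteEdges {s(a.1, a.2)}).Reachable a.1 a.2)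
    obtain ⟨d', -, he1, he2⟩ := q.exists_boundary_dart (↑S : Set V)
      (by simpa using haS) (by simpa using haS')
    have hadj' := d'.adj
    rw [SimpleGraph.deleteEdges_adj] at hadj'
    have hd'C : (d'.fst, d'.snd) ∈ C := by
      rw [hC]
      exact Finset.mem_filter.2 ⟨Finset.mem_product.2 ⟨by simpa using he1,
        Finset.mem_compl.2 (by simpa using he2)⟩, hadj'.1⟩
    have : (d'.fst, d'.snd) = a := by
      have := ha ▸ hd'C
      simpa using this
    apply hadj'.2
    rw [show d'.fst = a.1 from congrArg Prod.fst this,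
        show d'.snd = a.2 from congrArg Prod.snd this]
    simp
end

section
/- Let G be a finite connected simple graph, D a divisor on G, and q a vertex. Then there exists exactly one q-reduced divisor linearly equivalent to D. -/
open scoped Classical

namespace GraphDivAux

open GraphDiv Finset

variable {V : Type*} [Fintype V] {G : SimpleGraph V}

lemma lap_apply (f : V → ℤ) (v : V) :
    lap G f v = ∑ w : V, if G.Adj v w then f v - f w else 0 := rfl

lemma lap_add (f g : V → ℤ) (v : V) :
    lap G (fun w => f w + g w) v = lap G f v + lap G g v := by
  rw [lap_apply, lap_apply, lap_apply, ← Finset.sum_add_distrib]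
  refine Finset.sum_congr rfl fun w _ => ?_
  split_ifs <;> ring

lemma lap_neg (f : V → ℤ) (v : V) :
    lap G (fun w => -f w) v = -lap G f v := by
  rw [lap_apply, lap_apply, ← Finset.sum_neg_distrib]
  refine Finset.sum_congr rfl fun w _ => ?_
  split_ifs <;> ring

lemma lap_smul (c : ℤ) (f : V → ℤ) (v : V) :
    lap G (fun w => c * f w) v = c * lap G f v := by
  rw [lap_apply, lap_apply, Finset.mul_sum]
  refine Finset.sum_congr rfl fun w _ => ?_
  split_ifs <;> ring

lemma lap_shift (f : V → ℤ) (c : ℤ) (v : V) :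
    lap G (fun w => f w - c) v = lap G f v := by
  rw [lap_apply, lap_apply]
  refine Finset.sum_congr rfl fun w _ => ?_
  split_ifs <;> ring

lemma lap_sum (f : V → ℤ) : ∑ v : V, lap G f v = 0 := by
  have key : (∑ v : V, lap G f v) = - ∑ v : V, lap G f v := by
    calc ∑ v : V, ∑ w : V, (if G.Adj v w then f v - f w else 0)
        = ∑ w : V, ∑ v : V, (if G.Adj v w then f v - f w else 0) := Finset.sum_comm
      _ = ∑ v : V, ∑ w : V, -(if G.Adj v w then f v - f w else 0) := by
            refine Finset.sum_congr rfl fun v _ => Finset.sum_congr rfl fun w _ => ?_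
            by_cases h : G.Adj v w
            · rw [if_pos h, if_pos h.symm]; ring
            · rw [if_neg h, if_neg (fun h' => h h'.symm), neg_zero]
      _ = - ∑ v : V, ∑ w : V, (if G.Adj v w then f v - f w else 0) := by
            simp only [Finset.sum_neg_distrib]
  linarith

lemma lap_ind_mem (S : Finset V) {v : V} (hv : v ∈ S) :
    lap G (fun w => if w ∈ S then (1:ℤ) else 0) v
      = (((G.neighborFinset v).filter (fun Q => Q ∉ S)).card : ℤ) := by
  have h1 : lap G (fun w => if w ∈ S then (1:ℤ) else 0) v
      = ∑ w : V, (if w ∈ (G.neighborFinset v).filter (fun Q => Q ∉ S) then (1:ℤ) else 0) := by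
    rw [lap_apply]
    refine Finset.sum_congr rfl fun w _ => ?_
    by_cases hadj : G.Adj v w
    · by_cases hw : w ∈ S
      · rw [if_pos hadj, if_pos hv, if_pos hw,
          if_neg (by simp [Finset.mem_filter, hw])]
        ring
      · rw [if_pos hadj, if_pos hv, if_neg hw,
          if_pos (by simp [Finset.mem_filter, SimpleGraph.mem_neighborFinset, hadj, hw])]
        ring
    · rw [if_neg hadj, if_neg (by simp [Finset.mem_filter, SimpleGraph.mem_neighborFinset, hadj])]
  rw [h1, Finset.sum_boole]
  congr 1
  rw [Finset.filter_mem_eq_inter, Finset.univ_inter]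

lemma lap_ind_not_mem (S : Finset V) {v : V} (hv : v ∉ S) :
    lap G (fun w => if w ∈ S then (1:ℤ) else 0) v ≤ 0 := by
  rw [lap_apply]
  refine Finset.sum_nonpos fun w _ => ?_
  by_cases hadj : G.Adj v w
  · rw [if_pos hadj, if_neg hv]
    split_ifs <;> omega
  · rw [if_neg hadj]

/-- At a vertex of maximal `f`-value, the Laplacian dominates the out-degree
with respect to any set containing all maximizers near `v`. -/
lemma outdeg_le_lap (f : V → ℤ) (T : Finset V) {v : V}
    (hmax : ∀ w, f w ≤ f v) (hT : ∀ w, w ∉ T → f w < f v) :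
    (((G.neighborFinset v).filter (fun Q => Q ∉ T)).card : ℤ) ≤ lap G f v := by
  have h1 : (((G.neighborFinset v).filter (fun Q => Q ∉ T)).card : ℤ)
      = ∑ w : V, (if w ∈ (G.neighborFinset v).filter (fun Q => Q ∉ T) then (1:ℤ) else 0) := by
    rw [Finset.sum_boole, Finset.filter_mem_eq_inter, Finset.univ_inter]
  rw [h1, lap_apply]
  refine Finset.sum_le_sum fun w _ => ?_
  by_cases hadj : G.Adj v w
  · by_cases hw : w ∈ T
    · rw [if_pos hadj, if_neg (by simp [Finset.mem_filter, hw])]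
      have := hmax w; omega
    · rw [if_pos hadj,
        if_pos (by simp [Finset.mem_filter, SimpleGraph.mem_neighborFinset, hadj, hw])]
      have := hT w hw; omega
  · rw [if_neg hadj, if_neg (by simp [Finset.mem_filter, SimpleGraph.mem_neighborFinset, hadj])]

lemma lap_le_neg_outdeg (f : V → ℤ) (T : Finset V) {v : V}
    (hmin : ∀ w, f v ≤ f w) (hT : ∀ w, w ∉ T → f v < f w) :
    lap G f v ≤ -(((G.neighborFinset v).filter (fun Q => Q ∉ T)).card : ℤ) := by
  have := outdeg_le_lap (G := G) (fun w => -f w) T (v := v)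
    (fun w => by simpa using hmin w) (fun w hw => by simpa using hT w hw)
  rw [lap_neg] at this
  omega

/-- connected graphs: kernel of the Laplacian is constants -/
lemma const_of_lap_eq_zero (hG : G.Connected) (f : V → ℤ)
    (h : ∀ v, lap G f v = 0) (u w : V) : f u = f w := by
  have key : ∀ (a b : V) (_ : G.Walk a b), (∀ z, f z ≤ f a) → f b = f a := by
    intro a b p
    induction p with
    | nil => intro _; rfl
    | @cons x y z hadj p ih =>
        intro hmax
        have hxy : f y = f x := by
          have h0 : ∑ w : V, (if G.Adj x w then f x - f w else 0) = 0 := h x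
          have hterm : ∀ w ∈ Finset.univ, (0:ℤ) ≤ if G.Adj x w then f x - f w else 0 := by
            intro w _
            split_ifs with hh
            · have := hmax w; omega
            · exact le_rfl
          have := (Finset.sum_eq_zero_iff_of_nonneg hterm).mp h0 y (Finset.mem_univ y)
          rw [if_pos hadj] at this
          omega
        have : f z = f y := ih (fun z' => by have := hmax z'; omega)
        omega
  obtain ⟨a, _, hamax⟩ := Finset.exists_max_image Finset.univ f ⟨u, Finset.mem_univ u⟩
  have hmax : ∀ z, f z ≤ f a := fun z => hamax z (Finset.mem_univ z)
  have h1 : f u = f a := ((hG.preconnected a u).elim fun p => key a u p hmax)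
  have h2 : f w = f a := ((hG.preconnected a w).elim fun p => key a w p hmax)
  omega



/-- The exponential potential: firing it massively sends chips towards every non-`q` vertex. -/
noncomputable def pot (G : SimpleGraph V) (q : V) : V → ℤ :=
  fun v => ((Fintype.card V + 1) ^ (Fintype.card V - G.dist v q) : ℕ)

lemma pot_pos (q v : V) : 1 ≤ pot G q v := by
  unfold pot
  exact_mod_cast Nat.one_le_pow _ _ (Nat.succ_pos _)

lemma lap_pot_le (hG : G.Connected) {q v : V} (hv : v ≠ q) :
    lap G (pot G q) v ≤ -1 := by
  set n := Fintype.card V with hn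
  set k := G.dist v q with hk
  have hk1 : 1 ≤ k := hG.pos_dist_of_ne hv
  have hkn : k < n := by
    obtain ⟨p, hp, hlen⟩ := hG.exists_path_of_dist v q
    rw [hk, ← hlen]
    exact hp.length_lt
  -- find a neighbor strictly closer to q
  obtain ⟨p, hlen⟩ := hG.exists_walk_length_eq_dist v q
  have hpnil : ¬ p.Nil := by
    intro hnil
    rw [SimpleGraph.Walk.nil_iff_length_eq.mp hnil] at hlen
    omega
  obtain ⟨w0, hadj, p', rfl⟩ := SimpleGraph.Walk.not_nil_iff.mp hpnil
  have hw0 : G.dist w0 q ≤ k - 1 := by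
    have := SimpleGraph.dist_le p'
    simp [SimpleGraph.Walk.length_cons] at hlen
    omega
  -- pot w0 ≥ (n+1) * pot v
  have hpotv : pot G q v = ((n + 1) ^ (n - k) : ℕ) := by rw [pot]
  have hpow : ((n + 1) ^ (n - k + 1) : ℕ) ≤ ((n + 1) ^ (n - G.dist w0 q) : ℕ) :=
    Nat.pow_le_pow_right (Nat.succ_pos n) (by omega)
  have hpotw0 : ((n:ℤ) + 1) * pot G q v ≤ pot G q w0 := by
    rw [hpotv, pot]
    push_cast
    calc ((n:ℤ) + 1) * ((n:ℤ) + 1) ^ (n - k)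
        = ((n:ℤ) + 1) ^ (n - k + 1) := by ring
      _ ≤ _ := by exact_mod_cast hpow
  have hw0v : w0 ≠ v := fun h => (G.loopless.irrefl v (h ▸ hadj)).elim
  -- split the sum
  have hsplit : lap G (pot G q) v
      = (if G.Adj v w0 then pot G q v - pot G q w0 else 0)
        + ∑ w ∈ Finset.univ.erase w0, (if G.Adj v w then pot G q v - pot G q w else 0) :=
    (Finset.add_sum_erase Finset.univ _ (Finset.mem_univ w0)).symm
  have hterm0 : (if G.Adj v w0 then pot G q v - pot G q w0 else 0)
      ≤ -(n:ℤ) * pot G q v := by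
    rw [if_pos hadj]
    have := hpotw0
    nlinarith [pot_pos (G := G) q v]
  have hrest : ∑ w ∈ Finset.univ.erase w0, (if G.Adj v w then pot G q v - pot G q w else 0)
      ≤ ((n:ℤ) - 1) * (pot G q v - 1) := by
    have hcard : ((Finset.univ.erase w0).card : ℤ) = (n:ℤ) - 1 := by
      rw [Finset.card_erase_of_mem (Finset.mem_univ w0), Finset.card_univ]
      have : 1 ≤ n := Fintype.card_pos_iff.mpr ⟨v⟩
      omega
    calc ∑ w ∈ Finset.univ.erase w0, (if G.Adj v w then pot G q v - pot G q w else 0)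
        ≤ ∑ _w ∈ Finset.univ.erase w0, (pot G q v - 1) := by
          refine Finset.sum_le_sum fun w _ => ?_
          split_ifs
          · have := pot_pos (G := G) q w; omega
          · have := pot_pos (G := G) q v; omega
      _ = ((Finset.univ.erase w0).card : ℤ) * (pot G q v - 1) := by
          rw [Finset.sum_const, nsmul_eq_mul]
      _ = ((n:ℤ) - 1) * (pot G q v - 1) := by rw [hcard]
  have hn1 : (1:ℤ) ≤ (n:ℤ) := by exact_mod_cast Fintype.card_pos_iff.mpr ⟨v⟩
  have hpv := pot_pos (G := G) q v
  rw [hsplit]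
  nlinarith [hterm0, hrest]

theorem qreduced_unique (hG : G.Connected) {q : V} {D1 D2 : V → ℤ}
    (h1 : QReduced G q D1) (h2 : QReduced G q D2) (h : LinEquiv G D1 D2) : D1 = D2 := by
  obtain ⟨f, hf⟩ := h
  have hfd : ∀ v, D1 v - D2 v = lap G f v := fun v => congrFun hf v
  by_cases hconst : ∀ v, f v = f q
  · funext v
    have hlz : lap G f v = 0 := by
      rw [lap_apply]
      refine Finset.sum_eq_zero fun w _ => ?_
      split_ifs with hh
      · rw [hconst v, hconst w]; ring
      · rfl
    have := hfd v; omega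
  · exfalso
    push_neg at hconst
    obtain ⟨v0, hv0⟩ := hconst
    by_cases hqmax : ∀ u, f u ≤ f q
    · -- q is a global max; use the min set and reducedness of D2
      have hlt : f v0 < f q := lt_of_le_of_ne (hqmax v0) hv0
      set T : Finset V := Finset.univ.filter (fun w => ∀ u, f w ≤ f u) with hT
      obtain ⟨b, _, hbmin⟩ := Finset.exists_min_image Finset.univ f ⟨q, Finset.mem_univ q⟩
      have hbT : b ∈ T := by
        simp only [hT, Finset.mem_filter]
        exact ⟨Finset.mem_univ b, fun u => hbmin u (Finset.mem_univ u)⟩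
      have hqT : q ∉ T := by
        simp only [hT, Finset.mem_filter]
        push_neg
        intro _
        exact ⟨v0, by omega⟩
      obtain ⟨P, hP, hPlt⟩ := h2.2 T ⟨b, hbT⟩ hqT
      have hPprop : ∀ u, f P ≤ f u := by
        simp only [hT, Finset.mem_filter] at hP
        exact hP.2
      have hPout : ∀ w, w ∉ T → f P < f w := by
        intro w hw
        simp only [hT, Finset.mem_filter] at hw
        push_neg at hw
        obtain ⟨u, hu⟩ := hw (Finset.mem_univ w)
        have := hPprop u; omega
      have hlap := lap_le_neg_outdeg (G := G) f T hPprop hPout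
      have hPq : P ≠ q := fun hh => hqT (hh ▸ hP)
      have hD1P := h1.1 P hPq
      have := hfd P
      omega
    · -- the max is not attained at q; use the max set and reducedness of D1
      push_neg at hqmax
      obtain ⟨u0, hu0⟩ := hqmax
      obtain ⟨a, _, hamax⟩ := Finset.exists_max_image Finset.univ f ⟨q, Finset.mem_univ q⟩
      set T : Finset V := Finset.univ.filter (fun w => ∀ u, f u ≤ f w) with hT
      have haT : a ∈ T := by
        simp only [hT, Finset.mem_filter]
        exact ⟨Finset.mem_univ a, fun u => hamax u (Finset.mem_univ u)⟩
      have hqT : q ∉ T := by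
        simp only [hT, Finset.mem_filter]
        push_neg
        intro _
        exact ⟨u0, by omega⟩
      obtain ⟨P, hP, hPlt⟩ := h1.2 T ⟨a, haT⟩ hqT
      have hPprop : ∀ u, f u ≤ f P := by
        simp only [hT, Finset.mem_filter] at hP
        exact hP.2
      have hPout : ∀ w, w ∉ T → f w < f P := by
        intro w hw
        simp only [hT, Finset.mem_filter] at hw
        push_neg at hw
        obtain ⟨u, hu⟩ := hw (Finset.mem_univ w)
        have := hPprop u; omega
      have hlap := outdeg_le_lap (G := G) f T hPprop hPout
      have hPq : P ≠ q := fun hh => hqT (hh ▸ hP)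
      have hD2P := h2.1 P hPq
      have := hfd P
      omega

lemma lap_sub (f g : V → ℤ) (v : V) :
    lap G (fun w => f w - g w) v = lap G f v - lap G g v := by
  rw [lap_apply, lap_apply, lap_apply, ← Finset.sum_sub_distrib]
  refine Finset.sum_congr rfl fun w _ => ?_
  split_ifs <;> ring

theorem exists_qreduced (hG : G.Connected) (D : V → ℤ) (q : V) :
    ∃ D' : V → ℤ, QReduced G q D' ∧ LinEquiv G D' D := by
  classical
  -- `valid f` : the divisor `D - lap f` is effective away from `q`
  set valid : (V → ℤ) → Prop := fun f => ∀ v, v ≠ q → 0 ≤ D v - lap G f v with hvalid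
  -- Step 1: there is a valid f
  have step1 : ∃ f, valid f := by
    set c : ℤ := ∑ v : V, |D v| with hc
    have hc0 : 0 ≤ c := Finset.sum_nonneg fun v _ => abs_nonneg _
    have hcD : ∀ v, -c ≤ D v := by
      intro v
      have h1 : |D v| ≤ c := Finset.single_le_sum (fun i _ => abs_nonneg (D i)) (Finset.mem_univ v)
      have h2 := neg_abs_le (D v)
      omega
    refine ⟨fun v => c * pot G q v, fun v hv => ?_⟩
    have h1 : lap G (fun w => c * pot G q w) v = c * lap G (pot G q) v := lap_smul c _ v
    have h2 : lap G (pot G q) v ≤ -1 := lap_pot_le hG hv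
    have h3 : c * lap G (pot G q) v ≤ c * (-1) := mul_le_mul_of_nonneg_left h2 hc0
    have := hcD v
    omega
  -- The q-values of valid divisors are bounded above by deg D
  have hsum : ∀ f : V → ℤ,
      (D q - lap G f q) + ∑ v ∈ Finset.univ.erase q, (D v - lap G f v) = degDiv D := by
    intro f
    rw [Finset.add_sum_erase Finset.univ (fun v => D v - lap G f v) (Finset.mem_univ q),
      Finset.sum_sub_distrib, lap_sum, sub_zero]
    rfl
  have hbdd : ∀ k : ℤ, (∃ f, valid f ∧ D q - lap G f q = k) → k ≤ degDiv D := by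
    rintro k ⟨f, hf, rfl⟩
    have h1 : 0 ≤ ∑ v ∈ Finset.univ.erase q, (D v - lap G f v) :=
      Finset.sum_nonneg fun v hv => hf v (Finset.mem_erase.mp hv).1
    have := hsum f
    omega
  obtain ⟨M, ⟨f1, hf1v, hf1q⟩, hMub⟩ :=
    Int.exists_greatest_of_bdd (P := fun k => ∃ f, valid f ∧ D q - lap G f q = k)
      ⟨degDiv D, hbdd⟩ ⟨_, step1.choose, step1.choose_spec, rfl⟩
  -- The normalized firing functions achieving the maximum
  set Sset : Set (V → ℤ) := {f | f q = 0 ∧ valid f ∧ D q - lap G f q = M} with hSset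
  have hSne : Sset.Nonempty := by
    refine ⟨fun v => f1 v - f1 q, sub_self _, ?_, ?_⟩
    · intro v hv
      rw [lap_shift]
      exact hf1v v hv
    · rw [lap_shift]
      exact hf1q
  -- Sset is finite
  set Φ : (V → ℤ) → (V → ℤ) := fun f v => D v - lap G f v with hΦ
  have hval_ub : ∀ f, valid f → (D q - lap G f q = M) →
      ∀ v, v ≠ q → D v - lap G f v ≤ degDiv D - M := by
    intro f hfv hfq v hv
    have h1 : D v - lap G f v ≤ ∑ w ∈ Finset.univ.erase q, (D w - lap G f w) :=
      Finset.single_le_sum (f := fun w => D w - lap G f w)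
        (fun w hw => hfv w (Finset.mem_erase.mp hw).1)
        (Finset.mem_erase.mpr ⟨hv, Finset.mem_univ v⟩)
    have := hsum f
    omega
  have himg : Φ '' Sset ⊆ Set.pi Set.univ
      (fun _ : V => Set.Icc (min M 0) (max M (degDiv D - M))) := by
    rintro E ⟨f, ⟨hfq0, hfv, hfq⟩, rfl⟩
    intro v _
    by_cases hv : v = q
    · subst hv
      exact ⟨le_trans (min_le_left _ _) (le_of_eq hfq.symm), hfq ▸ le_max_left _ _⟩
    · refine ⟨le_trans (min_le_right _ _) (hfv v hv), le_trans (hval_ub f hfv hfq v hv) (le_max_right _ _)⟩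
  have hinj : Set.InjOn Φ Sset := by
    rintro f ⟨hfq0, -, -⟩ g ⟨hgq0, -, -⟩ hfg
    have hlapeq : ∀ v, lap G (fun w => f w - g w) v = 0 := by
      intro v
      have h1 := congrFun hfg v
      simp only [hΦ] at h1
      rw [lap_sub]
      omega
    have hcst := const_of_lap_eq_zero hG (fun w => f w - g w) hlapeq
    funext v
    have := hcst v q
    simp only [hfq0, hgq0] at this
    omega
  have hfin : Sset.Finite :=
    Set.Finite.of_finite_image
      (Set.Finite.subset (Set.Finite.pi fun _ => Set.finite_Icc _ _) himg) hinj
  -- choose a maximizer of the total firing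
  obtain ⟨fs, hfsT, hfsmax⟩ := Finset.exists_max_image hfin.toFinset (fun f => ∑ v : V, f v)
    (by rwa [Set.Finite.toFinset_nonempty])
  have hfsS : fs ∈ Sset := (Set.Finite.mem_toFinset hfin).mp hfsT
  obtain ⟨hfsq0, hfsv, hfsq⟩ := hfsS
  refine ⟨fun v => D v - lap G fs v, ⟨fun P hP => hfsv P hP, ?_⟩, ?_⟩
  · -- the reducedness condition
    intro Sf hSfne hqSf
    by_contra hcon
    push_neg at hcon
    set χ : V → ℤ := fun w => if w ∈ Sf then (1:ℤ) else 0 with hχ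
    set f' : V → ℤ := fun v => fs v + χ v with hf'
    have hlap' : ∀ v, lap G f' v = lap G fs v + lap G χ v := fun v => lap_add fs χ v
    have hvalid' : valid f' := by
      intro v hv
      rw [hlap' v]
      by_cases hvS : v ∈ Sf
      · have h1 := lap_ind_mem (G := G) Sf hvS
        have h2 := hcon v hvS
        rw [← hχ] at h1
        omega
      · have h1 := lap_ind_not_mem (G := G) Sf hvS
        rw [← hχ] at h1
        have h2 := hfsv v hv
        omega
    have hq' : D q - lap G f' q = M := by
      have h1 : lap G χ q ≤ 0 := by
        have := lap_ind_not_mem (G := G) Sf hqSf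
        rwa [← hχ] at this
      have h2 := hMub (D q - lap G f' q) ⟨f', hvalid', rfl⟩
      have h3 := hlap' q
      omega
    have hf'S : f' ∈ Sset := by
      refine ⟨?_, hvalid', hq'⟩
      simp only [hf', hχ, hfsq0, if_neg hqSf]
      ring
    have hsum' : ∑ v : V, f' v = (∑ v : V, fs v) + (Sf.card : ℤ) := by
      simp only [hf']
      rw [Finset.sum_add_distrib]
      congr 1
      simp only [hχ]
      rw [Finset.sum_boole, Finset.filter_mem_eq_inter, Finset.univ_inter]
    have hle := hfsmax f' ((Set.Finite.mem_toFinset hfin).mpr hf'S)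
    have hcard : 0 < Sf.card := Finset.card_pos.mpr hSfne
    have : (0:ℤ) < (Sf.card : ℤ) := by exact_mod_cast hcard
    omega
  · -- linear equivalence
    refine ⟨fun v => -fs v, ?_⟩
    funext v
    simp only [Pi.sub_apply, lap_neg]
    ring

end GraphDivAux


open GraphDiv in
/-- Existence and uniqueness of the `q`-reduced divisor in each linear
equivalence class. -/
theorem stmt1 {V : Type*} [Fintype V] (G : SimpleGraph V) (hG : G.Connected)
    (D : V → ℤ) (q : V) :
    ∃! D' : V → ℤ, QReduced G q D' ∧ LinEquiv G D' D := by
  obtain ⟨D', hred, hlin⟩ := GraphDivAux.exists_qreduced hG D q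
  refine ⟨D', ⟨hred, hlin⟩, ?_⟩
  rintro E ⟨hEred, hElin⟩
  obtain ⟨g, hg⟩ := hElin
  obtain ⟨f, hf⟩ := hlin
  refine GraphDivAux.qreduced_unique hG hEred hred ⟨fun v => g v - f v, ?_⟩
  funext v
  have h1 := congrFun hg v
  have h2 := congrFun hf v
  simp only [Pi.sub_apply] at h1 h2 ⊢
  rw [GraphDivAux.lap_sub]
  omega
end

section
/- Let K_n be the complete graph on vertices P_1, …, P_n with n ≥ 4. Then the complete linear system |(n−2)P_1 − P_2| is empty; that is, there is no function f : V(K_n) → ℤ such that Δ(f) + (n−2)P_1 − P_2 is an effective divisor. -/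
open scoped Classical

open GraphDiv in
/-- On `K_n` (`n ≥ 4`), the linear system `|(n-2)P₁ - P₂|` is empty. -/
theorem stmt3 (n : ℕ) (hn : 4 ≤ n) :
    ¬ ∃ f : Fin n → ℤ,
      Effective (lap (⊤ : SimpleGraph (Fin n)) f +
        fun v => if v = (⟨0, by omega⟩ : Fin n) then (n : ℤ) - 2
                 else if v = (⟨1, by omega⟩ : Fin n) then -1 else 0) := by
  rintro ⟨f, hf⟩
  set S : ℤ := ∑ v : Fin n, f v with hS
  have hlap : ∀ P : Fin n, lap (⊤ : SimpleGraph (Fin n)) f P = n * f P - S := by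
    intro P
    have h1 : lap (⊤ : SimpleGraph (Fin n)) f P = ∑ Q : Fin n, (f P - f Q) := by
      unfold lap
      refine Finset.sum_congr rfl fun Q _ => ?_
      by_cases h : P = Q <;> simp [h]
    rw [h1, Finset.sum_sub_distrib, Finset.sum_const, Finset.card_univ, Fintype.card_fin,
      ← hS]
    push_cast
    ring
  set e0 : Fin n := ⟨0, by omega⟩ with he0
  set e1 : Fin n := ⟨1, by omega⟩ with he1
  have hne : e1 ≠ e0 := by simp [he0, he1, Fin.ext_iff]
  set g : Fin n → ℤ := fun v => n * f v - S with hg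
  have h0 : 0 ≤ g e0 + ((n : ℤ) - 2) := by
    have := hf e0
    simpa [hlap e0, hg] using this
  have h1 : 1 ≤ g e1 := by
    have := hf e1
    simp [hlap e1, hne] at this
    simp only [hg]
    omega
  have hv : ∀ v : Fin n, v ≠ e0 → 0 ≤ g v := by
    intro v hv0
    by_cases hv1 : v = e1
    · subst hv1; omega
    · have := hf v
      simpa [hlap v, hg, hv0, hv1] using this
  have hsum : ∑ v : Fin n, g v = 0 := by
    simp only [hg]
    rw [Finset.sum_sub_distrib, Finset.sum_const, Finset.card_univ, Fintype.card_fin,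
      ← Finset.mul_sum, ← hS]
    simp [mul_comm]
  have hsplit : g e0 + ∑ v ∈ Finset.univ.erase e0, g v = 0 := by
    rw [Finset.add_sum_erase _ _ (Finset.mem_univ e0)] at *
    exact hsum
  -- g e0 ≤ -1
  have hg0neg : g e0 ≤ -1 := by
    have hmem : e1 ∈ Finset.univ.erase e0 := Finset.mem_erase.2 ⟨hne, Finset.mem_univ _⟩
    have := Finset.single_le_sum (f := g)
      (fun v hv' => hv v (Finset.ne_of_mem_erase hv')) hmem
    omega
  -- each g v for v ≠ e0 is at least g e0 + n
  have hstep : ∀ v : Fin n, v ≠ e0 → g e0 + (n : ℤ) ≤ g v := by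
    intro v hv0
    have hdiff : g v - g e0 = n * (f v - f e0) := by simp [hg]; ring
    have hpos : 0 < g v - g e0 := by
      have := hv v hv0
      omega
    have hn0 : (0 : ℤ) < n := by exact_mod_cast (by omega : 0 < n)
    have : 1 ≤ f v - f e0 := by
      by_contra hcon
      push_neg at hcon
      have : f v - f e0 ≤ 0 := by omega
      nlinarith [hdiff, hpos]
    nlinarith [hdiff]
  have hcard : (Finset.univ.erase e0).card = n - 1 := by
    rw [Finset.card_erase_of_mem (Finset.mem_univ _), Finset.card_univ, Fintype.card_fin]
  have hbig : ((n : ℤ) - 1) * (g e0 + n) ≤ ∑ v ∈ Finset.univ.erase e0, g v := by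
    have h := Finset.card_nsmul_le_sum (Finset.univ.erase e0) g (g e0 + (n : ℤ))
      (fun v hv' => hstep v (Finset.ne_of_mem_erase hv'))
    rw [hcard, nsmul_eq_mul] at h
    have hc : ((n - 1 : ℕ) : ℤ) = (n : ℤ) - 1 := by
      push_cast [Nat.cast_sub (by omega : 1 ≤ n)]; ring
    rw [hc] at h
    exact h
  have hn4 : (4 : ℤ) ≤ (n : ℤ) := by exact_mod_cast hn
  nlinarith [hsplit, hbig, h0, hg0neg]
end

section
/- Let K_n be the complete graph on vertices P_1, …, P_n with n ≥ 4, and let D = P_1 + ⋯ + P_n. Then the rank of D equals 2; that is, for every effective divisor E of degree 2, |D − E| ≠ ∅, and there exists an effective divisor E′ of degree 3 with |D − E′| = ∅. -/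
open scoped Classical

open GraphDiv

lemma lap_top_eq (n : ℕ) (f : Fin n → ℤ) (P : Fin n) :
    lap (⊤ : SimpleGraph (Fin n)) f P = n * f P - ∑ Q, f Q := by
  have h : lap (⊤ : SimpleGraph (Fin n)) f P = ∑ Q : Fin n, (f P - f Q) := by
    unfold lap
    apply Finset.sum_congr rfl
    intro Q _
    split_ifs with hadj
    · rfl
    · have hPQ : P = Q := by simpa using hadj
      rw [hPQ, sub_self]
  rw [h, Finset.sum_sub_distrib, Finset.sum_const, Finset.card_univ, Fintype.card_fin]
  push_cast; ring

/-- On `K_n` (`n ≥ 4`), the divisor `D = P₁ + ⋯ + Pₙ` has rank `2`. -/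
theorem stmt4 (n : ℕ) (hn : 4 ≤ n) :
    RankEq (⊤ : SimpleGraph (Fin n)) (fun _ => 1) 2 := by
  have hn4 : (4 : ℤ) ≤ (n : ℤ) := by exact_mod_cast hn
  set v0 : Fin n := ⟨0, by omega⟩ with hv0
  set v1 : Fin n := ⟨1, by omega⟩ with hv1
  have h01 : v0 ≠ v1 := by
    simp [hv0, hv1, Fin.ext_iff]
  refine ⟨by norm_num, ?_, ?_⟩
  · -- rank ≥ 2
    intro E hEeff hEdeg
    have hEdeg' : ∑ P, E P ≤ 2 := hEdeg
    by_cases hbig : ∀ P, E P ≤ 1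
    · refine ⟨(fun _ => 1) - E, fun P => ?_, 0, ?_⟩
      · have := hbig P
        simp only [Pi.sub_apply]
        omega
      · funext P
        simp [lap]
    · push_neg at hbig
      obtain ⟨P₀, hP₀⟩ := hbig
      have hle : ∀ Q : Fin n, E Q ≤ ∑ P, E P := by
        intro Q
        have : ∑ P ∈ ({Q} : Finset (Fin n)), E P ≤ ∑ P, E P :=
          Finset.sum_le_sum_of_subset_of_nonneg (Finset.subset_univ _)
            (fun P _ _ => hEeff P)
        simpa using this
      have hrest : ∀ Q, Q ≠ P₀ → E Q ≤ 0 := by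
        intro Q hQ
        by_contra hQ'
        push_neg at hQ'
        have hsum : E P₀ + E Q ≤ ∑ P, E P := by
          have : ∑ P ∈ ({P₀, Q} : Finset (Fin n)), E P ≤ ∑ P, E P :=
            Finset.sum_le_sum_of_subset_of_nonneg (Finset.subset_univ _)
              (fun P _ _ => hEeff P)
          rwa [Finset.sum_pair (fun h => hQ h.symm)] at this
        omega
      set f : Fin n → ℤ := fun Q => if Q = P₀ then 1 else 0 with hfdef
      have hsf : ∑ Q, f Q = 1 := by simp [hfdef]
      refine ⟨((fun _ => 1) - E) + lap (⊤ : SimpleGraph (Fin n)) f, fun P => ?_, f, ?_⟩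
      · simp only [Pi.add_apply, Pi.sub_apply, lap_top_eq, hsf]
        by_cases hP : P = P₀
        · subst hP
          simp only [hfdef, if_pos rfl, mul_one]
          have := hle P
          omega
        · have := hrest P hP
          simp only [hfdef, if_neg hP, mul_zero]
          omega
      · funext P
        simp [Pi.add_apply, Pi.sub_apply]
  · -- witness E of degree 3 with empty linear system
    refine ⟨fun P => (if P = v0 then 2 else 0) + (if P = v1 then 1 else 0),
      fun P => ?_, ?_, ?_⟩
    · dsimp only
      split_ifs <;> norm_num
    · show ∑ P : Fin n, ((if P = v0 then (2:ℤ) else 0) + (if P = v1 then 1 else 0)) = 2 + 1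
      rw [Finset.sum_add_distrib]
      simp [Finset.sum_ite_eq']
    · rw [Set.eq_empty_iff_forall_notMem]
      rintro E' ⟨hE'eff, f, hf⟩
      set σ : ℤ := ∑ Q, f Q with hσ
      have key : ∀ P : Fin n, E' P = 1 - ((if P = v0 then 2 else 0) + (if P = v1 then 1 else 0))
          + ((n : ℤ) * f P - σ) := by
        intro P
        have h := congrFun hf P
        simp only [Pi.sub_apply, lap_top_eq] at h
        linarith [h]
      obtain ⟨Pm, -, hmin⟩ := Finset.exists_min_image Finset.univ f
        ⟨v0, Finset.mem_univ _⟩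
      have hmin' : ∀ Q, f Pm ≤ f Q := fun Q => hmin Q (Finset.mem_univ Q)
      set m := f Pm with hm
      set a := f v0 - m with ha
      set b := f v1 - m with hb
      have ha0 : 0 ≤ a := by have := hmin' v0; omega
      have hb0 : 0 ≤ b := by have := hmin' v1; omega
      set τ := σ - (n : ℤ) * m with hτ
      have hτab : a + b ≤ τ := by
        have hss : ∑ Q ∈ ({v0, v1} : Finset (Fin n)), (f Q - m) ≤ ∑ Q, (f Q - m) :=
          Finset.sum_le_sum_of_subset_of_nonneg (Finset.subset_univ _)
            (fun Q _ _ => by simpa using hmin' Q)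
        rw [Finset.sum_pair h01] at hss
        have heq : ∑ Q : Fin n, (f Q - m) = τ := by
          rw [Finset.sum_sub_distrib, Finset.sum_const, Finset.card_univ, Fintype.card_fin,
            hτ, hσ]
          push_cast; ring
        rw [heq] at hss
        linarith [hss]
      have hτ1 : τ ≤ 1 := by
        have h1 := hE'eff Pm
        rw [key Pm] at h1
        have he : (n : ℤ) * f Pm - σ = -τ := by rw [hτ, hm]; ring
        rw [he] at h1
        split_ifs at h1 <;> linarith
      have h0 := hE'eff v0
      rw [key v0, if_pos rfl, if_neg h01] at h0
      have hna : τ + 1 ≤ (n : ℤ) * a := by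
        have he : (n : ℤ) * f v0 - σ = (n : ℤ) * a - τ := by rw [ha, hτ]; ring
        linarith [h0, he.le, he.ge]
      have h1 := hE'eff v1
      rw [key v1, if_neg (Ne.symm h01), if_pos rfl] at h1
      have hnb : τ ≤ (n : ℤ) * b := by
        have he : (n : ℤ) * f v1 - σ = (n : ℤ) * b - τ := by rw [hb, hτ]; ring
        linarith [h1, he.le, he.ge]
      have ha1 : 1 ≤ a := by
        rcases lt_or_ge a 1 with h | h
        · exfalso
          have ha' : a = 0 := le_antisymm (by omega) ha0
          rw [ha', mul_zero] at hna
          linarith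
        · exact h
      have hb1 : 1 ≤ b := by
        rcases lt_or_ge b 1 with h | h
        · exfalso
          have hb' : b = 0 := le_antisymm (by omega) hb0
          rw [hb', mul_zero] at hnb
          linarith
        · exact h
      linarith
end

section
/- Let W_n be the wheel graph on vertices P_1, …, P_n with n ≥ 5, where P_1 is the hub, and let D = P_1 + ⋯ + P_n. Then the rank of D equals 2. -/
open scoped Classical

open GraphDiv

section Aux

variable {V : Type*} [Fintype V]

lemma myAux_sum_le_of_mem (s : Finset V) (f : V → ℤ) {a : V} (ha : a ∈ s)
    (h0 : ∀ x ∈ s, f x ≤ 0) : ∑ x ∈ s, f x ≤ f a := by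
  rw [← Finset.add_sum_erase s f ha]
  have h1 : ∑ x ∈ s.erase a, f x ≤ 0 :=
    Finset.sum_nonpos fun x hx => h0 x (Finset.mem_of_mem_erase hx)
  linarith

lemma myAux_sum_le_pair (f : V → ℤ) {a b : V} (hab : a ≠ b)
    (h0 : ∀ x, f x ≤ 0) : ∑ x, f x ≤ f a + f b := by
  rw [← Finset.add_sum_erase Finset.univ f (Finset.mem_univ a)]
  have hb : b ∈ Finset.univ.erase a := Finset.mem_erase.2 ⟨hab.symm, Finset.mem_univ b⟩
  have := myAux_sum_le_of_mem (Finset.univ.erase a) f hb (fun x _ => h0 x)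
  linarith

lemma myAux_lap_unit (G : SimpleGraph V) (v P : V) :
    lap G (unit v) P =
      if P = v then (∑ Q : V, if G.Adj v Q then (1:ℤ) else 0)
      else if G.Adj P v then -1 else 0 := by
  unfold lap unit
  by_cases h : P = v
  · subst h
    have key : ∀ Q : V,
        (if G.Adj P Q then ((if P = P then (1:ℤ) else 0) - (if Q = P then 1 else 0)) else 0)
        = if G.Adj P Q then (1:ℤ) else 0 := by
      intro Q
      by_cases hadj : G.Adj P Q
      · simp [hadj, hadj.ne']
      · simp [hadj]
    rw [Finset.sum_congr rfl (fun Q _ => key Q)]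
    simp
  · have key : ∀ Q : V,
        (if G.Adj P Q then ((if P = v then (1:ℤ) else 0) - (if Q = v then 1 else 0)) else 0)
        = if Q = v then (if G.Adj P v then (-1:ℤ) else 0) else 0 := by
      intro Q
      by_cases hq : Q = v
      · subst hq; simp [h]
      · simp [hq, h]
    rw [Finset.sum_congr rfl (fun Q _ => key Q), Finset.sum_ite_eq' Finset.univ v]
    simp [h]

lemma myAux_part1 (m : ℕ) (hm : 4 ≤ m) (E : Option (Fin m) → ℤ)
    (hE : Effective E) (hdeg : degDiv E ≤ 2) :
    (linSys (wheel m) ((fun _ => (1:ℤ)) - E)).Nonempty := by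
  by_cases hA : ∀ P, E P ≤ 1
  · refine ⟨(fun _ => (1:ℤ)) - E, ⟨fun P => ?_, 0, ?_⟩⟩
    · have := hA P; simp only [Pi.sub_apply]; omega
    · funext P; simp [lap]
  · push_neg at hA
    obtain ⟨v, hv⟩ := hA
    have hv2 : 2 ≤ E v := hv
    have hsum : E v + ∑ Q ∈ Finset.univ.erase v, E Q = degDiv E :=
      Finset.add_sum_erase _ E (Finset.mem_univ v)
    have hothers : ∀ P, P ≠ v → E P = 0 := by
      intro P hP
      have h1 : E P ≤ ∑ Q ∈ Finset.univ.erase v, E Q :=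
        Finset.single_le_sum (fun q _ => hE q)
          (Finset.mem_erase.2 ⟨hP, Finset.mem_univ P⟩)
      have := hE P
      omega
    have hv3 : E v ≤ 2 := by
      have h1 : 0 ≤ ∑ Q ∈ Finset.univ.erase v, E Q :=
        Finset.sum_nonneg fun q _ => hE q
      omega
    refine ⟨(fun _ => (1:ℤ)) - E + lap (wheel m) (unit v),
      ⟨?_, unit v, add_sub_cancel_left _ _⟩⟩
    intro P
    rw [Pi.add_apply, Pi.sub_apply, myAux_lap_unit]
    by_cases hP : P = v
    · subst hP
      rw [if_pos rfl]
      have hex : ∃ Q, (wheel m).Adj P Q := by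
        cases P with
        | none => exact ⟨some ⟨0, by omega⟩, by simp [wheel]⟩
        | some i => exact ⟨none, by simp [wheel]⟩
      obtain ⟨Q₀, hQ₀⟩ := hex
      have hge : (1:ℤ) ≤ ∑ Q : Option (Fin m), if (wheel m).Adj P Q then (1:ℤ) else 0 := by
        have h1 := Finset.single_le_sum
          (f := fun Q => if (wheel m).Adj P Q then (1:ℤ) else 0)
          (fun q _ => by by_cases h : (wheel m).Adj P q <;> simp [h]) (Finset.mem_univ Q₀)
        refine le_trans ?_ h1
        simp [hQ₀]
      omega
    · rw [if_neg hP, hothers P hP]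
      split <;> omega

lemma myAux_part2 (m : ℕ) (hm : 4 ≤ m) :
    ∃ E : Option (Fin m) → ℤ, Effective E ∧ degDiv E = 3 ∧
      linSys (wheel m) ((fun _ => (1:ℤ)) - E) = ∅ := by
  have hm1 : m - 1 < m := by omega
  set last : Fin m := ⟨m - 1, hm1⟩ with hlastdef
  refine ⟨fun P => if P = none then 2 else if P = some last then 1 else 0, ?_, ?_, ?_⟩
  · intro P
    show (0:ℤ) ≤ if P = none then 2 else if P = some last then 1 else 0
    split
    · norm_num
    · split <;> norm_num
  · unfold degDiv
    rw [Fintype.sum_option]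
    simp [Finset.sum_ite_eq']
  · rw [Set.eq_empty_iff_forall_notMem]
    rintro E' ⟨hEff, g, hg⟩
    have hval : ∀ P, E' P = ((1:ℤ) - (if P = none then 2 else if P = some last then 1 else 0))
        + lap (wheel m) g P := by
      intro P
      have h1 := congrFun hg P
      simp only [Pi.sub_apply] at h1
      linarith
    obtain ⟨v₀, -, hmin⟩ := Finset.exists_min_image (Finset.univ : Finset (Option (Fin m))) g
      ⟨none, Finset.mem_univ _⟩
    set μ := g v₀ with hμ
    have hmin' : ∀ v, μ ≤ g v := fun v => hmin v (Finset.mem_univ v)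
    have hterm : ∀ P : Option (Fin m), g P = μ →
        ∀ Q, (if (wheel m).Adj P Q then g P - g Q else 0) ≤ 0 := by
      intro P hP Q
      split
      · have := hmin' Q; omega
      · exact le_refl 0
    have hlap : ∀ P : Option (Fin m),
        lap (wheel m) g P = ∑ Q : Option (Fin m), if (wheel m).Adj P Q then g P - g Q else 0 :=
      fun P => rfl
    by_cases hc0 : g none = μ
    · have h1 : lap (wheel m) g none ≤ 0 := by
        rw [hlap]
        exact Finset.sum_nonpos fun Q _ => hterm none hc0 Q
      have h2 := hval none
      have h3 := hEff none
      have h4 : ((1:ℤ) - (if (none : Option (Fin m)) = none then 2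
          else if (none : Option (Fin m)) = some last then 1 else 0)) = -1 := by simp
      rw [h4] at h2
      linarith
    · have hgn : μ + 1 ≤ g none := by
        have := hmin' none; omega
      by_cases hcl : g (some last) = μ
      · have hadj : (wheel m).Adj (some last) none := by simp [wheel]
        have h1 : lap (wheel m) g (some last) ≤
            (if (wheel m).Adj (some last) none then g (some last) - g none else 0) := by
          rw [hlap]
          exact myAux_sum_le_of_mem _ _ (Finset.mem_univ none) (fun Q _ => hterm _ hcl Q)
        rw [if_pos hadj, hcl] at h1
        have h2 := hval (some last)
        have h3 := hEff (some last)
        have h4 : ((1:ℤ) - (if (some last : Option (Fin m)) = none then 2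
            else if (some last : Option (Fin m)) = some last then 1 else 0)) = 0 := by simp
        rw [h4] at h2
        linarith
      · -- min attained at some rim vertex other than last
        have hv0 : ∃ j : Fin m, g (some j) = μ := by
          cases hv : v₀ with
          | none => exact absurd (by rw [hμ, hv]) hc0
          | some j => exact ⟨j, by rw [hμ, hv]⟩
        obtain ⟨j, hj⟩ := hv0
        set T : Finset (Fin m) := Finset.univ.filter (fun i => g (some i) = μ) with hT
        have hTne : T.Nonempty := ⟨j, Finset.mem_filter.2 ⟨Finset.mem_univ j, hj⟩⟩
        set i : Fin m := T.max' hTne with hidef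
        have hiT : i ∈ T := T.max'_mem hTne
        have hgi : g (some i) = μ := (Finset.mem_filter.1 hiT).2
        have hine : i ≠ last := by
          intro h
          rw [h] at hgi
          exact hcl hgi
        have hilt : i.val + 1 < m := by
          have h1 : i.val < m := i.isLt
          have h2 : i.val ≠ m - 1 := by
            intro h
            exact hine (Fin.ext h)
          omega
        set succ : Fin m := ⟨i.val + 1, hilt⟩ with hsuccdef
        have hsuccT : succ ∉ T := by
          intro h
          have h1 := T.le_max' succ h
          rw [← hidef] at h1
          have h2 : i.val + 1 ≤ i.val := h1
          omega
        have hgsucc : μ + 1 ≤ g (some succ) := by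
          have h1 := hmin' (some succ)
          have h2 : g (some succ) ≠ μ := by
            intro h
            exact hsuccT (Finset.mem_filter.2 ⟨Finset.mem_univ _, h⟩)
          omega
        have hadj2 : (wheel m).Adj (some i) (some succ) := by
          show i ≠ succ ∧ ((i.val + 1) % m = succ.val ∨ (succ.val + 1) % m = i.val)
          refine ⟨Fin.ne_of_val_ne (show i.val ≠ i.val + 1 by omega), Or.inl ?_⟩
          show (i.val + 1) % m = i.val + 1
          exact Nat.mod_eq_of_lt hilt
        have hne : (none : Option (Fin m)) ≠ some succ := by simp
        have h1 : lap (wheel m) g (some i) ≤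
            (if (wheel m).Adj (some i) none then g (some i) - g none else 0)
            + (if (wheel m).Adj (some i) (some succ) then g (some i) - g (some succ) else 0) := by
          rw [hlap]
          exact myAux_sum_le_pair _ hne (fun Q => hterm _ hgi Q)
        have hadj1 : (wheel m).Adj (some i) none := by simp [wheel]
        rw [if_pos hadj1, if_pos hadj2, hgi] at h1
        have h2 := hval (some i)
        have h3 := hEff (some i)
        have h4 : ((1:ℤ) - (if (some i : Option (Fin m)) = none then 2
            else if some i = some last then 1 else 0)) = 1 := by
          simp [hine]
        rw [h4] at h2
        linarith

end Aux

open GraphDiv in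
/-- On the wheel `W_n` (`n = m + 1 ≥ 5`), `D = P₁ + ⋯ + Pₙ` has rank `2`. -/
theorem stmt7 (m : ℕ) (hm : 4 ≤ m) :
    RankEq (wheel m) (fun _ => 1) 2 := by
  refine ⟨by norm_num, ?_, ?_⟩
  · intro E hE hdeg
    exact myAux_part1 m hm E hE hdeg
  · obtain ⟨E, h1, h2, h3⟩ := myAux_part2 m hm
    exact ⟨E, h1, by rw [h2]; norm_num, h3⟩
end

section
/- Let W_n be the wheel graph on vertices P_1, …, P_n with n ≥ 5, where P_1 is the hub, and let D = P_1 + ⋯ + P_n. Then D is linearly equivalent to 4P_2 + P_4 + ⋯ + P_{n−1}. -/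
open scoped Classical

lemma fin_mk_eq_iff {m : ℕ} (a : ℕ) (ha : a < m) (j : Fin m) :
    (j = ⟨a, ha⟩) ↔ j.val = a :=
  ⟨fun h => by subst h; rfl, fun h => Fin.ext h⟩

lemma sum_one_val {m : ℕ} (c : ℕ) (hc : c < m) (x : ℤ) :
    ∑ j : Fin m, (if j.val = c then x else 0) = x := by
  have step : ∀ j : Fin m, (if j.val = c then x else 0)
      = (if j = ⟨c, hc⟩ then x else 0) := by
    intro j; simp only [fin_mk_eq_iff]
  rw [Finset.sum_congr rfl (fun j _ => step j)]
  simp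

lemma sum_two_val {m : ℕ} (c d : ℕ) (hc : c < m) (hd : d < m) (h : c ≠ d) (x y : ℤ) :
    ∑ j : Fin m, (if j.val = c then x else if j.val = d then y else 0) = x + y := by
  have step : ∀ j : Fin m, (if j.val = c then x else if j.val = d then y else 0) =
      (if j = ⟨c, hc⟩ then x else 0) + (if j = ⟨d, hd⟩ then y else 0) := by
    intro j
    simp only [fin_mk_eq_iff]
    split_ifs <;> omega
  rw [Finset.sum_congr rfl (fun j _ => step j), Finset.sum_add_distrib]
  simp



open GraphDiv in
/-- On the wheel `W_n` (`n = m + 1 ≥ 5`, hub `P₁ = none`, rim `P_j = some (j-2)`),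
`D = P₁ + ⋯ + Pₙ` is linearly equivalent to `4P₂ + P₄ + ⋯ + P_{n-1}`. -/
theorem stmt9 (m : ℕ) (hm : 4 ≤ m) :
    LinEquiv (wheel m) (fun _ => 1)
      (fun v => match v with
        | none => 0
        | some i => if i.val = 0 then 4
                    else if 2 ≤ i.val ∧ i.val ≤ m - 2 then 1 else 0) := by
  refine ⟨fun v => match v with
    | none => 0
    | some i => if i.val = 0 then -1 else 0, ?_⟩
  funext v
  simp only [Pi.sub_apply, lap]
  have hmod : ∀ a : ℕ, a < m →
      ((a + 1 < m ∧ (a + 1) % m = a + 1) ∨ (a + 1 = m ∧ (a + 1) % m = 0)) := by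
    intro a ha
    rcases Nat.lt_or_ge (a + 1) m with h | h
    · left; exact ⟨h, Nat.mod_eq_of_lt h⟩
    · right
      have hh : a + 1 = m := by omega
      exact ⟨hh, by rw [hh, Nat.mod_self]⟩
  match v with
  | none =>
    rw [Fintype.sum_option]
    have h1 : ∀ j : Fin m,
        (if (wheel m).Adj none (some j) then
          (0 : ℤ) - (if j.val = 0 then -1 else 0) else 0)
        = (if j.val = 0 then (1:ℤ) else 0) := by
      intro j
      have : (wheel m).Adj none (some j) := by simp [wheel]
      rw [if_pos this]
      by_cases h : j.val = 0
      · simp [h]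
      · simp [h]
    have h0 : ¬ (wheel m).Adj none none := by simp [wheel]
    rw [if_neg h0, Finset.sum_congr rfl (fun j _ => h1 j),
      sum_one_val (m := m) 0 (by omega)]
    norm_num
  | some i =>
    rw [Fintype.sum_option]
    have hub : (if (wheel m).Adj (some i) none then
        ((if i.val = 0 then (-1:ℤ) else 0) - 0) else 0)
        = (if i.val = 0 then (-1:ℤ) else 0) := by
      have : (wheel m).Adj (some i) none := by simp [wheel]
      rw [if_pos this]; ring
    rw [hub]
    have hi := i.isLt
    have hadj : ∀ j : Fin m, (wheel m).Adj (some i) (some j) ↔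
        (i.val ≠ j.val ∧ (j.val = i.val + 1 ∨ i.val = j.val + 1 ∨
          (i.val = 0 ∧ j.val = m - 1) ∨ (j.val = 0 ∧ i.val = m - 1))) := by
      intro j
      have hj := j.isLt
      have hraw : (wheel m).Adj (some i) (some j) ↔
          (i ≠ j ∧ ((i.val + 1) % m = j.val ∨ (j.val + 1) % m = i.val)) := Iff.rfl
      rw [hraw]
      have hval : (i ≠ j) ↔ (i.val ≠ j.val) := by simp [Fin.ext_iff]
      rw [hval]
      rcases hmod i.val hi with ⟨h1, h2⟩ | ⟨h1, h2⟩ <;>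
        rcases hmod j.val hj with ⟨g1, g2⟩ | ⟨g1, g2⟩ <;> rw [h2, g2] <;> omega
    by_cases h0 : i.val = 0
    · -- neighbors 1 and m-1
      have key : ∀ j : Fin m,
          (if (wheel m).Adj (some i) (some j) then
            ((if i.val = 0 then (-1:ℤ) else 0) - (if j.val = 0 then -1 else 0)) else 0)
          = (if j.val = 1 then (-1:ℤ) else if j.val = m - 1 then -1 else 0) := by
        intro j
        have hj := j.isLt
        have hcond : (wheel m).Adj (some i) (some j) ↔ (j.val = 1 ∨ j.val = m - 1) := by
          rw [hadj]; omega
        rw [if_congr hcond rfl rfl]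
        split_ifs <;> omega
      have hc1 : (1:ℕ) < m := by omega
      have hc2 : m - 1 < m := by omega
      have hc3 : (1:ℕ) ≠ m - 1 := by omega
      rw [Finset.sum_congr rfl (fun j _ => key j),
        sum_two_val (m := m) 1 (m-1) hc1 hc2 hc3]
      show (1 - (if i.val = 0 then (4:ℤ)
        else if 2 ≤ i.val ∧ i.val ≤ m - 2 then 1 else 0)) = _
      rw [if_pos h0, if_pos h0]
      norm_num
    · by_cases h1 : i.val = 1
      · have key : ∀ j : Fin m,
            (if (wheel m).Adj (some i) (some j) then
              ((if i.val = 0 then (-1:ℤ) else 0) - (if j.val = 0 then -1 else 0)) else 0)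
            = (if j.val = 0 then (1:ℤ) else 0) := by
          intro j
          have hj := j.isLt
          have hcond : (wheel m).Adj (some i) (some j) ↔ (j.val = 0 ∨ j.val = 2) := by
            rw [hadj]; omega
          rw [if_congr hcond rfl rfl]
          split_ifs <;> omega
        rw [Finset.sum_congr rfl (fun j _ => key j), sum_one_val (m := m) 0 (by omega)]
        have h2 : ¬ (2 ≤ i.val ∧ i.val ≤ m - 2) := by omega
        show (1 - (if i.val = 0 then (4:ℤ)
          else if 2 ≤ i.val ∧ i.val ≤ m - 2 then 1 else 0)) = _
        rw [if_neg h0, if_neg h2, if_neg h0]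
        norm_num
      · by_cases hm1 : i.val = m - 1
        · have key : ∀ j : Fin m,
              (if (wheel m).Adj (some i) (some j) then
                ((if i.val = 0 then (-1:ℤ) else 0) - (if j.val = 0 then -1 else 0)) else 0)
              = (if j.val = 0 then (1:ℤ) else 0) := by
            intro j
            have hj := j.isLt
            have hcond : (wheel m).Adj (some i) (some j) ↔ (j.val = 0 ∨ j.val = m - 2) := by
              rw [hadj]; omega
            rw [if_congr hcond rfl rfl]
            split_ifs <;> omega
          rw [Finset.sum_congr rfl (fun j _ => key j), sum_one_val (m := m) 0 (by omega)]
          have h2 : ¬ (2 ≤ i.val ∧ i.val ≤ m - 2) := by omega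
          show (1 - (if i.val = 0 then (4:ℤ)
            else if 2 ≤ i.val ∧ i.val ≤ m - 2 then 1 else 0)) = _
          rw [if_neg h0, if_neg h2, if_neg h0]
          norm_num
        · -- middle: all terms 0
          have key : ∀ j : Fin m,
              (if (wheel m).Adj (some i) (some j) then
                ((if i.val = 0 then (-1:ℤ) else 0) - (if j.val = 0 then -1 else 0)) else 0)
              = 0 := by
            intro j
            have hj := j.isLt
            by_cases hA : (wheel m).Adj (some i) (some j)
            · rw [if_pos hA]
              obtain ⟨hne, hor⟩ := (hadj j).mp hA
              have hjz : j.val ≠ 0 := by omega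
              rw [if_neg h0, if_neg hjz]
              ring
            · rw [if_neg hA]
          rw [Finset.sum_congr rfl (fun j _ => key j), Finset.sum_const_zero]
          have h2 : (2 ≤ i.val ∧ i.val ≤ m - 2) := by omega
          show (1 - (if i.val = 0 then (4:ℤ)
            else if 2 ≤ i.val ∧ i.val ≤ m - 2 then 1 else 0)) = _
          rw [if_neg h0, if_pos h2, if_neg h0]
          norm_num
end

section
/- Let K_n be the complete graph on vertices P_1, …, P_n with n ≥ 4, and let D = P_1 + ⋯ + P_n. Then every vertex P_i is a Galois point with respect to |D|. -/
open scoped Classical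

namespace GraphDiv

variable {V : Type*}

section Aux

variable {n : ℕ}

lemma lap_top (f : Fin n → ℤ) (P : Fin n) :
    lap (⊤ : SimpleGraph (Fin n)) f P = n * f P - ∑ Q, f Q := by
  have e1 : lap (⊤ : SimpleGraph (Fin n)) f P = ∑ Q : Fin n, (f P - f Q) := by
    unfold lap
    apply Finset.sum_congr rfl
    intro Q _
    split_ifs with hadj
    · rfl
    · have hPQ : P = Q := by simpa [SimpleGraph.top_adj] using hadj
      rw [hPQ]; ring
  rw [e1, Finset.sum_sub_distrib]
  simp [Finset.card_univ, mul_comm]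

lemma mem_linSys_top {D₀ E f : Fin n → ℤ} (heff : Effective E)
    (h : ∀ i, E i - D₀ i = n * f i - ∑ Q, f Q) :
    E ∈ linSys (⊤ : SimpleGraph (Fin n)) D₀ :=
  ⟨heff, f, funext fun i => by rw [Pi.sub_apply, lap_top]; exact h i⟩

lemma linSys_empty_top (hn : 2 ≤ n) (a b : Fin n) (hab : a ≠ b) (D₀ : Fin n → ℤ)
    (hDa : D₀ a = -1) (hDb : D₀ b = 0) (hD : ∀ i, i ≠ a → i ≠ b → D₀ i = 1) :
    linSys (⊤ : SimpleGraph (Fin n)) D₀ = ∅ := by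
  rw [Set.eq_empty_iff_forall_notMem]
  rintro E ⟨heff, f, hf⟩
  have hn0 : (0 : ℤ) < n := by exact_mod_cast Nat.lt_of_lt_of_le (by norm_num) hn
  have hn2 : (2 : ℤ) ≤ n := by exact_mod_cast hn
  set s := ∑ Q, f Q with hs
  have key : ∀ i, E i = D₀ i + ((n : ℤ) * f i - s) := by
    intro i
    have := congrFun hf i
    rw [Pi.sub_apply, lap_top] at this
    linarith
  set q := s / (n : ℤ) with hq
  set r := s % (n : ℤ) with hr
  have hqr : s = n * q + r := (Int.mul_ediv_add_emod s n).symm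
  have hr0 : 0 ≤ r := Int.emod_nonneg s (by exact_mod_cast (by omega : n ≠ 0))
  have hrn : r < n := Int.emod_lt_of_pos s hn0
  have hub : ∀ i, s - 1 ≤ (n : ℤ) * f i := by
    intro i
    have h1 := heff i
    have h2 := key i
    have h3 : D₀ i ≤ 1 := by
      by_cases ha : i = a
      · rw [ha, hDa]; norm_num
      by_cases hb : i = b
      · rw [hb, hDb]; norm_num
      · rw [hD i ha hb]
    linarith
  have hqf : ∀ i, q ≤ f i := by
    intro i
    by_contra hcon
    push_neg at hcon
    have h1 : f i ≤ q - 1 := by omega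
    have h2 : (n : ℤ) * f i ≤ n * (q - 1) := by
      exact mul_le_mul_of_nonneg_left h1 (le_of_lt hn0)
    have h3 : (n : ℤ) * (q - 1) = n * q - n := by ring
    linarith [hub i]
  have hfa : q + 1 ≤ f a := by
    by_contra hcon
    push_neg at hcon
    have h1 : f a ≤ q := by omega
    have h2 : (n : ℤ) * f a ≤ n * q := mul_le_mul_of_nonneg_left h1 (le_of_lt hn0)
    have h3 : s + 1 ≤ (n : ℤ) * f a := by
      have := key a; have := heff a; rw [hDa] at *; linarith [key a, heff a]
    linarith
  have sum_bound : ∀ g : Fin n → ℤ, (∀ i, g i ≤ f i) → ∑ i, g i ≤ s := by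
    intro g hg
    exact Finset.sum_le_sum (fun i _ => hg i)
  have hsum1 : (n : ℤ) * q + 1 ≤ s := by
    have hg : ∀ i, (q + (if i = a then 1 else 0)) ≤ f i := by
      intro i
      by_cases hia : i = a
      · subst hia; simpa using hfa
      · simp only [hia, if_false, add_zero]; exact hqf i
    have := sum_bound _ hg
    rw [Finset.sum_add_distrib, Finset.sum_const, Finset.sum_ite_eq'] at this
    simpa [Finset.card_univ, mul_comm] using this
  have hr1 : 1 ≤ r := by linarith
  have hfb : q + 1 ≤ f b := by
    by_contra hcon
    push_neg at hcon
    have h1 : f b ≤ q := by omega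
    have h2 : (n : ℤ) * f b ≤ n * q := mul_le_mul_of_nonneg_left h1 (le_of_lt hn0)
    have h3 : s ≤ (n : ℤ) * f b := by
      have := key b; have := heff b; rw [hDb] at *; linarith [key b, heff b]
    linarith
  have hsum2 : (n : ℤ) * q + 2 ≤ s := by
    have hg : ∀ i, (q + (if i = a then 1 else 0) + (if i = b then 1 else 0)) ≤ f i := by
      intro i
      by_cases hia : i = a
      · subst hia; simp [hab]; exact hfa
      by_cases hib : i = b
      · subst hib; simp [hia]; exact hfb
      · simp [hia, hib]; exact hqf i
    have := sum_bound _ hg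
    rw [Finset.sum_add_distrib, Finset.sum_add_distrib, Finset.sum_const,
      Finset.sum_ite_eq', Finset.sum_ite_eq'] at this
    simp only [Finset.mem_univ, if_true, Finset.card_univ, Fintype.card_fin,
      nsmul_eq_mul] at this
    linarith [this]
  have hr2 : 2 ≤ r := by linarith
  have hfall : ∀ i, q + 1 ≤ f i := by
    intro i
    by_contra hcon
    push_neg at hcon
    have h1 : f i ≤ q := by omega
    have h2 : (n : ℤ) * f i ≤ n * q := mul_le_mul_of_nonneg_left h1 (le_of_lt hn0)
    linarith [hub i]
  have hsum3 : (n : ℤ) * q + n ≤ s := by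
    have := sum_bound (fun _ => q + 1) (fun i => hfall i)
    rw [Finset.sum_const] at this
    have h2 : ((Finset.univ : Finset (Fin n)).card : ℤ) * (q + 1) = n * q + n := by
      simp [Finset.card_univ]; ring
    rw [nsmul_eq_mul] at this
    simp only [Finset.card_univ, Fintype.card_fin] at this
    linarith
  linarith

end Aux
section Rank

variable {n : ℕ}

lemma unit_eq (P i : Fin n) : unit P i = (if i = P then (1:ℤ) else 0) := by
  unfold unit
  by_cases h : i = P <;> simp [h]

lemma sum_unit (P : Fin n) : ∑ i, unit P i = 1 := by
  rw [Finset.sum_congr rfl (fun i _ => unit_eq P i)]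
  simp

lemma exists_ne' (hn : 4 ≤ n) (P : Fin n) : ∃ Q : Fin n, Q ≠ P := by
  have : 1 < Fintype.card (Fin n) := by simp; omega
  exact Fintype.exists_ne_of_one_lt_card this P

lemma rank_one (hn : 4 ≤ n) (P : Fin n) :
    RankEq (⊤ : SimpleGraph (Fin n)) ((fun _ => 1) - unit P) 1 := by
  obtain ⟨Q', hQ'⟩ := exists_ne' hn P
  have hn4 : (4 : ℤ) ≤ n := by exact_mod_cast hn
  refine ⟨by norm_num, ?_, ?_⟩
  · intro E heff hdeg
    unfold degDiv at hdeg
    have hle : ∀ i, E i ≤ ∑ j, E j := fun i =>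
      Finset.single_le_sum (fun j _ => heff j) (Finset.mem_univ i)
    by_cases hEP : 1 ≤ E P
    · have hEi0 : ∀ i, i ≠ P → E i = 0 := by
        intro i hi
        have hpair : E P + E i ≤ ∑ j, E j := by
          have h2 := Finset.sum_le_sum_of_subset_of_nonneg
            (Finset.subset_univ ({P, i} : Finset (Fin n))) (fun j _ _ => heff j)
          rwa [Finset.sum_pair (Ne.symm hi)] at h2
        have := heff i; linarith
      refine ⟨fun i => if i = P then ((n : ℤ) - 1 - E P) else 0,
        mem_linSys_top (f := unit P) ?_ ?_⟩
      · intro i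
        dsimp only
        by_cases h : i = P
        · rw [if_pos h]; have := hle P; linarith
        · rw [if_neg h]
      · intro i
        rw [sum_unit]
        simp only [Pi.sub_apply, unit_eq]
        by_cases h : i = P
        · subst h; simp; try ring
        · simp only [if_neg h]; rw [hEi0 i h]; ring
    · have hEP0 : E P = 0 := by have := heff P; omega
      refine ⟨(fun _ => (1:ℤ)) - unit P - E, mem_linSys_top (f := 0) ?_ ?_⟩
      · intro i
        simp only [Pi.sub_apply, unit_eq]
        by_cases h : i = P
        · subst h; rw [if_pos rfl, hEP0]; norm_num
        · rw [if_neg h]; have := hle i; linarith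
      · intro i; simp
  · refine ⟨fun i => unit P i + unit Q' i, ?_, ?_, ?_⟩
    · intro i; dsimp only; rw [unit_eq, unit_eq]; split_ifs <;> norm_num
    · unfold degDiv
      rw [Finset.sum_add_distrib, sum_unit, sum_unit]
    · apply linSys_empty_top (by omega) P Q' (Ne.symm hQ')
      · simp only [Pi.sub_apply, unit_eq, if_pos rfl, if_neg (Ne.symm hQ')]; norm_num
      · simp only [Pi.sub_apply, unit_eq, if_pos rfl, if_neg hQ']; norm_num
      · intro i hiP hiQ
        simp only [Pi.sub_apply, unit_eq, if_neg hiP, if_neg hiQ]; norm_num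

lemma rank_zero (hn : 4 ≤ n) (P Q : Fin n) :
    RankEq (⊤ : SimpleGraph (Fin n)) ((fun _ => 1) - unit P - unit Q) 0 := by
  obtain ⟨Q', hQ'⟩ := exists_ne' hn P
  have hn4 : (4 : ℤ) ≤ n := by exact_mod_cast hn
  refine ⟨by norm_num, ?_, ?_⟩
  · intro E heff hdeg
    unfold degDiv at hdeg
    have hE0 : ∀ i, E i = 0 := by
      intro i
      have hle : E i ≤ ∑ j, E j :=
        Finset.single_le_sum (fun j _ => heff j) (Finset.mem_univ i)
      have := heff i; omega
    by_cases hQP : Q = P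
    · subst hQP
      refine ⟨fun i => if i = Q then ((n : ℤ) - 2) else 0,
        mem_linSys_top (f := unit Q) ?_ ?_⟩
      · intro i; dsimp only
        by_cases h : i = Q
        · rw [if_pos h]; linarith
        · rw [if_neg h]
      · intro i
        rw [sum_unit]
        simp only [Pi.sub_apply, unit_eq]
        rw [hE0 i]
        by_cases h : i = Q
        · subst h; simp; try ring
        · simp only [if_neg h]; ring
    · refine ⟨(fun _ => (1:ℤ)) - unit P - unit Q - E, mem_linSys_top (f := 0) ?_ ?_⟩
      · intro i
        simp only [Pi.sub_apply, unit_eq]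
        rw [hE0 i]
        split_ifs <;> omega
      · intro i; simp
  · refine ⟨unit (if Q = P then Q' else Q), ?_, ?_, ?_⟩
    · intro i; rw [unit_eq]; split_ifs <;> norm_num
    · unfold degDiv; rw [sum_unit]; norm_num
    · by_cases hQP : Q = P
      · subst hQP
        rw [if_pos rfl]
        apply linSys_empty_top (by omega) Q Q' (Ne.symm hQ')
        · simp only [Pi.sub_apply, unit_eq, if_pos rfl, if_neg (Ne.symm hQ')]; norm_num
        · simp only [Pi.sub_apply, unit_eq, if_pos rfl, if_neg hQ']; norm_num
        · intro i hiP hiQ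
          simp only [Pi.sub_apply, unit_eq, if_neg hiP, if_neg hiQ]; norm_num
      · rw [if_neg hQP]
        apply linSys_empty_top (by omega) Q P hQP
        · simp only [Pi.sub_apply, unit_eq, if_pos rfl, if_neg hQP]; norm_num
        · simp only [Pi.sub_apply, unit_eq, if_pos rfl, if_neg (Ne.symm hQP)]; norm_num
        · intro i hiQ hiP
          simp only [Pi.sub_apply, unit_eq, if_neg hiP, if_neg hiQ]; norm_num

end Rank
section Group

lemma topAdjIff {N : ℕ} (π : Equiv.Perm (Fin N)) (a b : Fin N) :
    (⊤ : SimpleGraph (Fin N)).Adj (π a) (π b) ↔ (⊤ : SimpleGraph (Fin N)).Adj a b := by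
  simp [SimpleGraph.top_adj, π.injective.ne_iff]

/-- Any permutation is an automorphism of the complete graph. -/
def permAut {N : ℕ} (π : Equiv.Perm (Fin N)) :
    SimpleGraph.Iso (⊤ : SimpleGraph (Fin N)) (⊤ : SimpleGraph (Fin N)) :=
  ⟨π, topAdjIff π _ _⟩

lemma permAut_apply {N : ℕ} (π : Equiv.Perm (Fin N)) (v : Fin N) :
    (permAut π) v = π v := rfl

lemma permAut_mul {N : ℕ} (π ρ : Equiv.Perm (Fin N)) :
    permAut (π * ρ) = permAut π * permAut ρ := rfl

lemma permAut_one {N : ℕ} : permAut (1 : Equiv.Perm (Fin N)) = 1 := rfl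

/-- `permAut` as a monoid hom. -/
def permAutHom {N : ℕ} :
    Equiv.Perm (Fin N) →* ((⊤ : SimpleGraph (Fin N)) ≃g (⊤ : SimpleGraph (Fin N))) :=
  MonoidHom.mk' permAut permAut_mul

lemma permAutHom_injective {N : ℕ} : Function.Injective (permAutHom (N := N)) := by
  intro π ρ h
  ext v
  have h2 : (permAutHom π) v = (permAutHom ρ) v :=
    congrArg (fun σ : (⊤ : SimpleGraph (Fin N)) ≃g (⊤ : SimpleGraph (Fin N)) => σ v) h
  exact congrArg Fin.val h2

variable {m : ℕ}

/-- The rotation of `Fin (m+2)` fixing `P`. -/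
def tauP (P : Fin (m + 2)) : Equiv.Perm (Fin (m + 2)) :=
  (finSuccEquiv' P).trans ((Equiv.optionCongr (finRotate (m + 1))).trans (finSuccEquiv' P).symm)

lemma tauP_apply (P v : Fin (m + 2)) :
    tauP P v = (finSuccEquiv' P).symm
      (Option.map (finRotate (m + 1)) (finSuccEquiv' P v)) := rfl

lemma tauP_pow_apply (P : Fin (m + 2)) (k : ℕ) (v : Fin (m + 2)) :
    (tauP P ^ k) v = (finSuccEquiv' P).symm
      (Option.map (⇑(finRotate (m + 1) ^ k)) (finSuccEquiv' P v)) := by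
  induction k with
  | zero => simp
  | succ k ih =>
    rw [pow_succ', Equiv.Perm.mul_apply, ih, tauP_apply, Equiv.apply_symm_apply,
      Option.map_map, pow_succ' (finRotate (m + 1)) k, Equiv.Perm.coe_mul]

open Fin.NatCast Fin.CommRing in
lemma finRotate_pow_apply (k : ℕ) (q : Fin (m + 1)) :
    (finRotate (m + 1) ^ k) q = q + (k : Fin (m + 1)) := by
  induction k with
  | zero => simp
  | succ k ih =>
    rw [pow_succ', Equiv.Perm.mul_apply, ih, finRotate_succ_apply]
    push_cast
    ring

lemma tauP_pow_fix (P : Fin (m + 2)) (k : ℕ) : (tauP P ^ k) P = P := by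
  rw [tauP_pow_apply, finSuccEquiv'_at]
  simp [finSuccEquiv'_symm_none]

open Fin.NatCast in
lemma tauP_pow_free (P Q : Fin (m + 2)) (hQ : Q ≠ P) (k : ℕ) (hk : k < m + 1)
    (h : (tauP P ^ k) Q = Q) : k = 0 := by
  obtain ⟨q, hq⟩ : ∃ q, finSuccEquiv' P Q = some q := by
    rcases ho : finSuccEquiv' P Q with _ | q
    · exact absurd ((finSuccEquiv' P).injective (ho.trans (finSuccEquiv'_at P).symm)) hQ
    · exact ⟨q, rfl⟩
  rw [tauP_pow_apply, hq] at h
  have h2 : (some ((finRotate (m+1) ^ k) q) : Option (Fin (m+1))) = some q := by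
    apply (finSuccEquiv' P).symm.injective
    rw [Option.map_some] at h
    rw [h, ← hq, Equiv.symm_apply_apply]
  have h3 : q + (k : Fin (m + 1)) = q := by
    rw [← finRotate_pow_apply]
    exact Option.some_injective _ h2
  have h4 : (k : Fin (m + 1)) = 0 :=
    add_left_cancel (a := q) (by rw [add_zero]; exact h3)
  have h5 : k % (m + 1) = 0 := by
    have := congrArg Fin.val h4
    simpa [Fin.val_natCast] using this
  rwa [Nat.mod_eq_of_lt hk] at h5

open Fin.NatCast in
lemma tauP_pow_order (P : Fin (m + 2)) : tauP P ^ (m + 1) = 1 := by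
  apply Equiv.ext
  intro v
  show (tauP P ^ (m + 1)) v = v
  rw [tauP_pow_apply]
  rcases ho : finSuccEquiv' P v with _ | q
  · simp only [Option.map_none]
    rw [finSuccEquiv'_symm_none]
    exact ((finSuccEquiv' P).injective (ho.trans (finSuccEquiv'_at P).symm)).symm
  · simp only [Option.map_some]
    rw [finRotate_pow_apply]
    have hc : ((m + 1 : ℕ) : Fin (m + 1)) = 0 := by
      simp [Fin.ext_iff, Fin.val_natCast]
    rw [hc, add_zero, ← ho, Equiv.symm_apply_apply]

lemma orderOf_tauP (P : Fin (m + 2)) : orderOf (tauP P) = m + 1 := by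
  rw [orderOf_eq_iff (by omega)]
  refine ⟨tauP_pow_order P, ?_⟩
  intro k hk hk0 hcon
  have hQ : (finSuccEquiv' P).symm (some 0) ≠ P := by
    intro h
    have := congrArg (finSuccEquiv' P) h
    rw [Equiv.apply_symm_apply, finSuccEquiv'_at] at this
    exact Option.some_ne_none _ this
  have := tauP_pow_free P _ hQ k hk (by rw [hcon]; rfl)
  omega

lemma zpowers_elem {G : Type*} [Group G] {g : G} {M : ℕ} (hM : 0 < M) (hg : g ^ M = 1)
    {x : G} (hx : x ∈ Subgroup.zpowers g) : ∃ k : ℕ, k < M ∧ x = g ^ k := by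
  obtain ⟨k, hk⟩ := hx
  change g ^ k = x at hk
  have h1 : 0 ≤ k % (M : ℤ) := Int.emod_nonneg k (by exact_mod_cast hM.ne')
  have h2 : k % (M : ℤ) < M := Int.emod_lt_of_pos k (by exact_mod_cast hM)
  refine ⟨(k % (M : ℤ)).toNat, by omega, ?_⟩
  rw [← hk]
  have hsplit : g ^ (k : ℤ) = g ^ (k % (M : ℤ)) := by
    conv_lhs => rw [← Int.emod_add_mul_ediv k (M : ℤ)]
    rw [zpow_add, zpow_mul, zpow_natCast, hg, one_zpow, mul_one]
  rw [hsplit, ← zpow_natCast, Int.toNat_of_nonneg h1]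

end Group
section Harmonic

variable {N : ℕ}

local notation "GG" => (⊤ : SimpleGraph (Fin N))

lemma edge_map (σ : GG ≃g GG) {e : Sym2 (Fin N)} (he : e ∈ (⊤ : SimpleGraph (Fin N)).edgeSet) :
    Sym2.map ⇑σ e ∈ (⊤ : SimpleGraph (Fin N)).edgeSet := by
  induction e using Sym2.ind with
  | _ a b =>
    rw [Sym2.map_pair_eq, SimpleGraph.mem_edgeSet] at *
    exact σ.map_rel_iff.mpr he

lemma coe_comp_aut (σ ρ : GG ≃g GG) : ⇑σ ∘ ⇑ρ = ⇑(σ * ρ) := rfl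

lemma map_comp_aut (σ ρ : GG ≃g GG) (e : Sym2 (Fin N)) :
    Sym2.map ⇑σ (Sym2.map ⇑ρ e) = Sym2.map ⇑(σ * ρ) e := by
  rw [Sym2.map_map, coe_comp_aut]

lemma map_one_aut (e : Sym2 (Fin N)) : Sym2.map ⇑(1 : GG ≃g GG) e = e := by
  have h : ⇑(1 : GG ≃g GG) = id := rfl
  rw [h, Sym2.map_id, id_eq]

lemma map_inv_map (σ : GG ≃g GG) (e : Sym2 (Fin N)) :
    Sym2.map ⇑(σ⁻¹) (Sym2.map ⇑σ e) = e := by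
  rw [map_comp_aut, inv_mul_cancel, map_one_aut]

lemma map_map_inv (σ : GG ≃g GG) (e : Sym2 (Fin N)) :
    Sym2.map ⇑σ (Sym2.map ⇑(σ⁻¹) e) = e := by
  rw [map_comp_aut, mul_inv_cancel, map_one_aut]

lemma count_at_P (P : Fin N) (Δ : Subgroup (GG ≃g GG))
    (hfix : ∀ σ ∈ Δ, σ P = P)
    (hfree : ∀ σ ∈ Δ, ∀ Q, Q ≠ P → σ Q = Q → σ = 1)
    (e₀ : Sym2 (Fin N)) (he₀ : e₀ ∈ (⊤ : SimpleGraph (Fin N)).edgeSet)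
    (hh : ∃ σ ∈ Δ, P ∈ Sym2.map (⇑σ) e₀) :
    Nat.card {e : Sym2 (Fin N) //
        e ∈ (⊤ : SimpleGraph (Fin N)).edgeSet ∧ P ∈ e ∧ ∃ σ ∈ Δ, Sym2.map (⇑σ) e = e₀} = Nat.card Δ := by
  have hPe₀ : P ∈ e₀ := by
    obtain ⟨σ, hσ, hmem⟩ := hh
    rw [Sym2.mem_map] at hmem
    obtain ⟨x, hx, hxP⟩ := hmem
    have h1 : σ P = P := hfix σ hσ
    have h2 : x = P := σ.toEquiv.injective (by rw [← h1] at hxP; exact hxP)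
    rwa [h2] at hx
  obtain ⟨b₀, hb₀e⟩ := Sym2.mem_iff_exists.mp hPe₀
  have hb₀ : b₀ ≠ P := by
    rw [hb₀e, SimpleGraph.mem_edgeSet] at he₀
    exact fun h => he₀.ne h.symm
  let F : Δ → {e : Sym2 (Fin N) //
      e ∈ (⊤ : SimpleGraph (Fin N)).edgeSet ∧ P ∈ e ∧ ∃ σ ∈ Δ, Sym2.map (⇑σ) e = e₀} := fun σ =>
    ⟨Sym2.map ⇑((σ : GG ≃g GG)⁻¹) e₀,
      edge_map _ he₀,
      Sym2.mem_map.mpr ⟨P, hPe₀, hfix _ (inv_mem σ.2)⟩,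
      (σ : GG ≃g GG), σ.2, map_map_inv _ e₀⟩
  have hbij : Function.Bijective F := by
    constructor
    · intro σ ρ hF
      have h1 : Sym2.map ⇑((σ : GG ≃g GG)⁻¹) e₀ = Sym2.map ⇑((ρ : GG ≃g GG)⁻¹) e₀ :=
        congrArg Subtype.val hF
      have h2 : Sym2.map ⇑((ρ : GG ≃g GG) * (σ : GG ≃g GG)⁻¹) e₀ = e₀ := by
        rw [← map_comp_aut, h1, map_map_inv]
      set μ := (ρ : GG ≃g GG) * (σ : GG ≃g GG)⁻¹ with hμ
      have hμΔ : μ ∈ Δ := mul_mem ρ.2 (inv_mem σ.2)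
      rw [hb₀e, Sym2.map_pair_eq, Sym2.eq_iff] at h2
      have hμP : μ P = P := hfix μ hμΔ
      have hμb : μ b₀ = b₀ := by
        rcases h2 with ⟨_, h⟩ | ⟨h, _⟩
        · exact h
        · exact absurd (hμP.symm.trans h) hb₀.symm
      have hμ1 : μ = 1 := hfree μ hμΔ b₀ hb₀ hμb
      have h3 := hμ.symm.trans hμ1
      exact (Subtype.ext (mul_inv_eq_one.mp h3)).symm
    · rintro ⟨e, hE, hPe, ρ, hρ, hρe⟩
      refine ⟨⟨ρ, hρ⟩, Subtype.ext ?_⟩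
      show Sym2.map ⇑(ρ⁻¹) e₀ = e
      rw [← hρe, map_inv_map]
  rw [Nat.card_congr (Equiv.ofBijective F hbij).symm]

lemma count_off_P (P : Fin N) (Δ : Subgroup (GG ≃g GG))
    (hfree : ∀ σ ∈ Δ, ∀ Q, Q ≠ P → σ Q = Q → σ = 1)
    (P0 : Fin N) (hP0 : P0 ≠ P)
    (e₀ : Sym2 (Fin N)) (he₀ : e₀ ∈ (⊤ : SimpleGraph (Fin N)).edgeSet)
    (hh : ∃ σ ∈ Δ, P0 ∈ Sym2.map (⇑σ) e₀) (hc : ¬ Collapsed Δ e₀) :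
    Nat.card {e : Sym2 (Fin N) //
        e ∈ (⊤ : SimpleGraph (Fin N)).edgeSet ∧ P0 ∈ e ∧ ∃ σ ∈ Δ, Sym2.map (⇑σ) e = e₀} = 1 := by
  rw [Nat.card_eq_one_iff_unique]
  constructor
  · constructor
    rintro ⟨e, hE, hPe, ρ, hρ, hρe⟩ ⟨e', hE', hPe', ρ', hρ', hρe'⟩
    apply Subtype.ext
    show e = e'
    obtain ⟨x, hex⟩ := Sym2.mem_iff_exists.mp hPe
    obtain ⟨y, hey⟩ := Sym2.mem_iff_exists.mp hPe'
    have hx : P0 ≠ x := by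
      rw [hex, SimpleGraph.mem_edgeSet] at hE
      exact hE.ne
    set μ := ρ'⁻¹ * ρ with hμdef
    have hμΔ : μ ∈ Δ := mul_mem (inv_mem hρ') hρ
    have hμe : Sym2.map ⇑μ e = e' := by
      have h1 : Sym2.map ⇑(ρ'⁻¹) (Sym2.map ⇑ρ e) = Sym2.map ⇑(ρ'⁻¹) e₀ :=
        congrArg _ hρe
      rw [map_comp_aut] at h1
      rw [h1, ← hρe', map_inv_map]
    have hμe2 := hμe
    rw [hex, hey, Sym2.map_pair_eq, Sym2.eq_iff] at hμe2
    rcases hμe2 with ⟨h1, _⟩ | ⟨_, h2⟩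
    · have hμ1 : μ = 1 := hfree μ hμΔ P0 hP0 h1
      rw [← hμe, hμ1, map_one_aut]
    · -- h2 : μ x = P0, contradicts non-collapsedness of e₀
      exfalso
      apply hc
      refine ⟨ρ P0, ρ x, ?_, ?_⟩
      · rw [← hρe, hex, Sym2.map_pair_eq]
      · refine ⟨ρ * μ⁻¹ * ρ⁻¹, mul_mem (mul_mem hρ (inv_mem hμΔ)) (inv_mem hρ), ?_⟩
        have hinv : μ⁻¹ P0 = x := by
          have := congrArg ⇑(μ⁻¹) h2
          rw [RelIso.inv_apply_self] at this
          exact this.symm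
        show (ρ * μ⁻¹ * ρ⁻¹) (ρ P0) = ρ x
        rw [RelIso.mul_apply, RelIso.mul_apply, RelIso.inv_apply_self, hinv]
  · obtain ⟨σ, hσ, hmem⟩ := hh
    exact ⟨⟨Sym2.map ⇑σ e₀, edge_map _ he₀, hmem, σ⁻¹, inv_mem hσ, map_inv_map σ e₀⟩⟩

lemma quotHarmonic_of (P : Fin N) (Δ : Subgroup (GG ≃g GG))
    (hfix : ∀ σ ∈ Δ, σ P = P)
    (hfree : ∀ σ ∈ Δ, ∀ Q, Q ≠ P → σ Q = Q → σ = 1) :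
    QuotHarmonic (⊤ : SimpleGraph (Fin N)) Δ := by
  intro P0 e₁ e₂ he₁ he₂ hh₁ hh₂ hc₁ hc₂
  by_cases hP0 : P0 = P
  · subst hP0
    rw [count_at_P P0 Δ hfix hfree e₁ he₁ hh₁, count_at_P P0 Δ hfix hfree e₂ he₂ hh₂]
  · rw [count_off_P P Δ hfree P0 hP0 e₁ he₁ hh₁ hc₁,
      count_off_P P Δ hfree P0 hP0 e₂ he₂ hh₂ hc₂]

end Harmonic

end GraphDiv


open GraphDiv in
/-- On `K_n` (`n ≥ 4`), every vertex is a Galois point with respect to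
`|P₁ + ⋯ + Pₙ|`. -/
theorem stmt13 (n : ℕ) (hn : 4 ≤ n) (P : Fin n) :
    IsGaloisPoint (⊤ : SimpleGraph (Fin n)) (fun _ => 1) P := by
  obtain ⟨m, rfl⟩ : ∃ m, n = m + 2 := ⟨n - 2, by omega⟩
  obtain ⟨Q', hQ'⟩ := exists_ne' hn P
  refine ⟨rank_one hn P, fun Q => rank_zero hn P Q, ?_⟩
  set τ' := permAutHom (tauP P) with hτ'
  set H := Subgroup.zpowers τ' with hH
  have horder : τ' ^ (m + 1) = 1 := by
    rw [← map_pow, tauP_pow_order, map_one]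
  have hact : ∀ (k : ℕ) (v : Fin (m + 2)), (τ' ^ k) v = (tauP P ^ k) v := by
    intro k v
    rw [← map_pow]
    rfl
  have hfixH : ∀ σ ∈ H, σ P = P := by
    intro σ hσ
    obtain ⟨k, hk, rfl⟩ := zpowers_elem (by omega) horder hσ
    rw [hact k P]
    exact tauP_pow_fix P k
  have hfreeH : ∀ σ ∈ H, ∀ Q, Q ≠ P → σ Q = Q → σ = 1 := by
    intro σ hσ Q hQ hQfix
    obtain ⟨k, hk, rfl⟩ := zpowers_elem (by omega) horder hσ
    rw [hact k Q] at hQfix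
    have hk0 := tauP_pow_free P Q hQ k hk hQfix
    rw [hk0, pow_zero]
  refine ⟨H, ?_, ⟨P, Q', ?_⟩, ?_, ?_⟩
  · have hcard : Nat.card H = m + 1 := by
      rw [hH, Nat.card_zpowers, hτ',
        orderOf_injective permAutHom permAutHom_injective, orderOf_tauP]
    rw [hcard]
    have : degDiv (fun _ : Fin (m + 2) => (1 : ℤ)) = (m + 2 : ℤ) := by
      unfold degDiv
      rw [Finset.sum_const, Finset.card_univ, Fintype.card_fin]
      push_cast
      ring
    rw [this]
    push_cast
    ring
  · rintro ⟨σ, hσ, hσP⟩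
    exact hQ' ((hfixH σ hσ).symm.trans hσP).symm
  · intro Δ hΔ
    exact quotHarmonic_of P Δ (fun σ hσ => hfixH σ (hΔ hσ))
      (fun σ hσ Q hQ h => hfreeH σ (hΔ hσ) Q hQ h)
  · refine ⟨fun i => if i = P then ((m : ℤ) + 1) else 0,
      fun i => if i = P then 0 else 1, ?_, ?_, ?_, ?_⟩
    · intro h
      have h0 := congrFun h Q'
      rw [if_neg hQ', if_neg hQ'] at h0
      norm_num at h0
    · refine mem_linSys_top (f := unit P) ?_ ?_
      · intro i
        dsimp only
        split_ifs
        · positivity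
        · norm_num
      · intro i
        rw [sum_unit]
        simp only [Pi.sub_apply, unit_eq]
        by_cases h : i = P
        · subst h
          simp only [if_pos rfl]
          push_cast
          ring
        · simp only [if_neg h]
          push_cast
          ring
    · refine mem_linSys_top (f := 0) ?_ ?_
      · intro i
        dsimp only
        split_ifs <;> norm_num
      · intro i
        simp only [Pi.sub_apply, unit_eq, Pi.zero_apply]
        by_cases h : i = P
        · subst h; simp
        · simp [h]
    · intro σ hσ
      have hfixσ : σ P = P := hfixH σ hσ
      have hsymm : ∀ v, (σ.symm v = P) ↔ (v = P) := by
        intro v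
        constructor
        · intro h
          have h1 := congrArg ⇑σ h
          rw [RelIso.apply_symm_apply] at h1
          rw [h1, hfixσ]
        · intro h
          subst h
          have h2 := congrArg ⇑σ.symm hfixσ.symm
          rwa [RelIso.symm_apply_apply] at h2
      constructor
      · funext v
        show (if σ.symm v = P then ((m : ℤ) + 1) else 0) = (if v = P then ((m : ℤ) + 1) else 0)
        exact if_congr (hsymm v) rfl rfl
      · funext v
        show (if σ.symm v = P then (0:ℤ) else 1) = (if v = P then (0:ℤ) else 1)
        exact if_congr (hsymm v) rfl rfl
end

section
/- Let W_n be the wheel graph on vertices P_1, …, P_n with n ≥ 5 (hub P_1), and let D = P_1 + ⋯ + P_n. Then the hub P_1 is a Galois point with respect to |D|, and no rim vertex P_i (2 ≤ i ≤ n) is a Galois point with respect to |D|. In particular, W_n has exactly one Galois point with respect to |D|. -/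
open scoped Classical

namespace GaloisAux
open GraphDiv
open Fin.CommRing

variable {m : ℕ}

lemma fin_one_val (hm : 4 ≤ m) [NeZero m] : (1 : Fin m).val = 1 := by
  rw [Fin.val_one']; exact Nat.mod_eq_of_lt (by omega)

lemma fin_add_val (hm : 4 ≤ m) [NeZero m] (i : Fin m) {k : ℕ} (hk : k < m) :
    (i + (k : Fin m)).val = (i.val + k) % m := by
  rw [Fin.val_add, Fin.val_natCast, Nat.mod_eq_of_lt hk]

lemma fin_add_ne (hm : 4 ≤ m) [NeZero m] (i : Fin m) {k : ℕ} (h1 : 1 ≤ k) (h2 : k < m) :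
    i + (k : Fin m) ≠ i := by
  intro h
  have hv := congrArg Fin.val h
  rw [fin_add_val hm i h2] at hv
  have hi := i.isLt
  rcases Nat.lt_or_ge (i.val + k) m with hlt | hge
  · rw [Nat.mod_eq_of_lt hlt] at hv; omega
  · have h3 : i.val + k - m < m := by omega
    rw [Nat.mod_eq_sub_mod hge, Nat.mod_eq_of_lt h3] at hv; omega

lemma fin_succ_ne (hm : 4 ≤ m) [NeZero m] (i : Fin m) : i + 1 ≠ i := by
  have := fin_add_ne hm i (k := 1) le_rfl (by omega)
  simpa using this

lemma fin_succ2_ne (hm : 4 ≤ m) [NeZero m] (i : Fin m) : i + 1 + 1 ≠ i := by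
  have h2 : i + 1 + 1 = i + ((2 : ℕ) : Fin m) := by push_cast; ring
  rw [h2]
  exact fin_add_ne hm i (k := 2) (by omega) (by omega)

lemma fin_succ3_ne (hm : 4 ≤ m) [NeZero m] (i : Fin m) : i + 1 + 1 + 1 ≠ i := by
  have h2 : i + 1 + 1 + 1 = i + ((3 : ℕ) : Fin m) := by push_cast; ring
  rw [h2]
  exact fin_add_ne hm i (k := 3) (by omega) (by omega)

lemma wheel_adj_none (i : Fin m) : (wheel m).Adj none (some i) := trivial

lemma wheel_adj_some (hm : 4 ≤ m) [NeZero m] {i j : Fin m} :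
    (wheel m).Adj (some i) (some j) ↔ j = i + 1 ∨ i = j + 1 := by
  have key : ∀ a b : Fin m, ((a.val + 1) % m = b.val) ↔ b = a + 1 := by
    intro a b
    rw [Fin.ext_iff, Fin.val_add, fin_one_val hm]
    exact eq_comm
  show (i ≠ j ∧ ((i.val + 1) % m = j.val ∨ (j.val + 1) % m = i.val)) ↔ _
  rw [key i j, key j i]
  constructor
  · rintro ⟨-, h⟩; exact h
  · rintro (h | h)
    · exact ⟨fun hij => fin_succ_ne hm i (by rw [← h, hij]), Or.inl h⟩
    · exact ⟨fun hij => fin_succ_ne hm j (by rw [← h, ← hij]), Or.inr h⟩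

end GaloisAux
section Divisors
open GraphDiv
variable {V : Type*}

lemma GaloisAux.degDiv_unit [Fintype V] (R : V) : degDiv (unit R) = 1 := by
  simp [degDiv, unit]

lemma GaloisAux.degDiv_nonneg [Fintype V] {E : V → ℤ} (hE : Effective E) : 0 ≤ degDiv E :=
  Finset.sum_nonneg fun i _ => hE i

lemma GaloisAux.eff_zero [Fintype V] {E : V → ℤ} (hE : Effective E) (h : degDiv E ≤ 0) :
    E = 0 := by
  funext P
  have h1 : E P ≤ degDiv E :=
    Finset.single_le_sum (fun i _ => hE i) (Finset.mem_univ P)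
  have h2 := hE P
  simp only [Pi.zero_apply]; linarith

lemma GaloisAux.eff_unit [Fintype V] {E : V → ℤ} (hE : Effective E) (h : degDiv E = 1) :
    ∃ R, E = unit R := by
  by_cases hz : ∀ P, E P = 0
  · exfalso
    have : degDiv E = 0 := Finset.sum_eq_zero fun i _ => hz i
    omega
  · push_neg at hz
    obtain ⟨P, hP⟩ := hz
    have hP1 : 1 ≤ E P := by have := hE P; omega
    have hle : E P ≤ degDiv E :=
      Finset.single_le_sum (fun i _ => hE i) (Finset.mem_univ P)
    refine ⟨P, funext fun Q => ?_⟩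
    rcases eq_or_ne Q P with rfl | hQP
    · simp only [unit, eq_self_iff_true, if_true]
      linarith
    · have hsub : ∑ x ∈ ({P, Q} : Finset V), E x ≤ degDiv E :=
        Finset.sum_le_sum_of_subset_of_nonneg (Finset.subset_univ _)
          (fun i _ _ => hE i)
      rw [Finset.sum_pair (Ne.symm hQP)] at hsub
      have := hE Q
      have hu : unit P Q = 0 := by simp [unit, hQP]
      rw [hu]
      have := hE Q
      linarith

lemma GaloisAux.linSys_nonempty_of (G : SimpleGraph V) [Fintype V] (X f : V → ℤ)
    (h : Effective (X + lap G f)) : (linSys G X).Nonempty :=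
  ⟨X + lap G f, h, f, add_sub_cancel_left X (lap G f)⟩

lemma GaloisAux.linSys_empty (G : SimpleGraph V) [Fintype V] [Nonempty V] {q : V}
    {D : V → ℤ} (h : QReduced G q D) (hq : D q < 0) : linSys G D = ∅ := by
  rw [Set.eq_empty_iff_forall_notMem]
  rintro E ⟨hEff, f, hf⟩
  have hE : ∀ v, E v = D v + lap G f v := by
    intro v
    have := congrFun hf v
    simp only [Pi.sub_apply] at this
    omega
  set S : Finset V := Finset.univ.filter (fun v => ∀ w, f v ≤ f w) with hS
  have hSne : S.Nonempty := by
    obtain ⟨v, -, hv⟩ := Finset.exists_min_image Finset.univ f ⟨Classical.arbitrary V, Finset.mem_univ _⟩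
    exact ⟨v, Finset.mem_filter.2 ⟨Finset.mem_univ _, fun w => hv w (Finset.mem_univ w)⟩⟩
  by_cases hqS : q ∈ S
  · have hqmin : ∀ w, f q ≤ f w := (Finset.mem_filter.1 hqS).2
    have hlap : lap G f q ≤ 0 := by
      refine Finset.sum_nonpos fun Q _ => ?_
      split
      · rename_i hadj
        have := hqmin Q; omega
      · exact le_rfl
    have h1 := hEff q
    have h2 := hE q
    linarith
  · obtain ⟨P, hPS, hPlt⟩ := h.2 S hSne hqS
    have hPmin : ∀ w, f P ≤ f w := (Finset.mem_filter.1 hPS).2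
    have hlap : lap G f P ≤ -(((G.neighborFinset P).filter (fun Q => Q ∉ S)).card : ℤ) := by
      have step : ∀ Q ∈ Finset.univ,
          (if G.Adj P Q then f P - f Q else 0) ≤
          (if Q ∈ (G.neighborFinset P).filter (fun Q => Q ∉ S) then (-1 : ℤ) else 0) := by
        intro Q _
        by_cases hadj : G.Adj P Q
        · by_cases hQS : Q ∈ S
          · rw [if_pos hadj, if_neg (by simp [Finset.mem_filter, hQS])]
            have := hPmin Q; omega
          · rw [if_pos hadj, if_pos (by simp [Finset.mem_filter, SimpleGraph.mem_neighborFinset, hadj, hQS])]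
            have hQ' : ¬ ∀ w, f Q ≤ f w := by
              intro hc
              exact hQS (Finset.mem_filter.2 ⟨Finset.mem_univ _, hc⟩)
            push_neg at hQ'
            obtain ⟨w, hw⟩ := hQ'
            have := hPmin w
            omega
        · rw [if_neg hadj, if_neg (by simp [Finset.mem_filter, SimpleGraph.mem_neighborFinset, hadj])]
      calc lap G f P ≤ ∑ Q : V, (if Q ∈ (G.neighborFinset P).filter (fun Q => Q ∉ S) then (-1 : ℤ) else 0) :=
            Finset.sum_le_sum step
        _ = -(((G.neighborFinset P).filter (fun Q => Q ∉ S)).card : ℤ) := by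
            rw [Finset.sum_ite_mem, Finset.univ_inter, Finset.sum_const]
            simp [mul_comm]
    have h1 := hEff P
    have h2 := hE P
    linarith

end Divisors
namespace GaloisAux
open GraphDiv
open Fin.CommRing

variable {m : ℕ}

lemma wheel_adj_some_none (i : Fin m) : (wheel m).Adj (some i) none := trivial

lemma lap_wheel_none (hm : 4 ≤ m) [NeZero m] (f : Option (Fin m) → ℤ) :
    lap (wheel m) f none = m * f none - ∑ j : Fin m, f (some j) := by
  unfold lap
  rw [Fintype.sum_option, if_neg ((wheel m).loopless.irrefl none)]
  have h1 : ∀ j : Fin m,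
      (if (wheel m).Adj none (some j) then f none - f (some j) else 0)
        = f none - f (some j) := fun j => if_pos (wheel_adj_none j)
  rw [Finset.sum_congr rfl (fun j _ => h1 j), Finset.sum_sub_distrib,
    Finset.sum_const, Finset.card_univ, Fintype.card_fin]
  push_cast
  ring

lemma fin_succ_ne_pred (hm : 4 ≤ m) [NeZero m] (i : Fin m) : i + 1 ≠ i - 1 := by
  intro h
  have h2 : i + 1 + 1 = i := by rw [h, sub_add_cancel]
  exact fin_succ2_ne hm i h2

lemma lap_wheel_some (hm : 4 ≤ m) [NeZero m] (f : Option (Fin m) → ℤ) (i : Fin m) :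
    lap (wheel m) f (some i) =
      3 * f (some i) - f none - f (some (i + 1)) - f (some (i - 1)) := by
  unfold lap
  rw [Fintype.sum_option, if_pos (wheel_adj_some_none i)]
  have h1 : ∀ j : Fin m,
      (if (wheel m).Adj (some i) (some j) then f (some i) - f (some j) else 0)
        = (if j ∈ ({i + 1, i - 1} : Finset (Fin m)) then f (some i) - f (some j) else 0) := by
    intro j
    congr 1
    rw [wheel_adj_some hm]
    simp only [Finset.mem_insert, Finset.mem_singleton, eq_iff_iff]
    constructor
    · rintro (h | h)
      · exact Or.inl h
      · exact Or.inr (by rw [eq_sub_iff_add_eq, ← h])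
    · rintro (h | h)
      · exact Or.inl h
      · exact Or.inr (by rw [eq_sub_iff_add_eq] at h; rw [← h])
  rw [Finset.sum_congr rfl (fun j _ => h1 j), Finset.sum_ite_mem, Finset.univ_inter,
    Finset.sum_pair (fin_succ_ne_pred hm i)]
  ring

lemma succ_escape [NeZero m] {S : Finset (Option (Fin m))} {j i₀ : Fin m}
    (h0 : some i₀ ∈ S) (hj : some j ∉ S) :
    ∃ i : Fin m, some i ∈ S ∧ some (i + 1) ∉ S := by
  by_contra hc
  push_neg at hc
  have key : ∀ k : ℕ, some (i₀ + (k : Fin m)) ∈ S := by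
    intro k
    induction k with
    | zero => simpa using h0
    | succ n ih =>
        have := hc _ ih
        have harr : i₀ + ((n + 1 : ℕ) : Fin m) = i₀ + (n : Fin m) + 1 := by
          push_cast; ring
        rwa [harr]
  have := key (j - i₀).val
  rw [Fin.cast_val_eq_self, add_sub_cancel] at this
  exact hj this

lemma wheel_qreduced (hm : 4 ≤ m) [NeZero m] {W : Option (Fin m) → ℤ} (j : Fin m)
    {q : Option (Fin m)} (hq : q = none ∨ q = some j)
    (h0 : W none ≤ 0) (hrim : ∀ x, W (some x) ≤ 1) (hj : W (some j) ≤ 0)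
    (hP : ∀ P, P ≠ q → 0 ≤ W P) : QReduced (wheel m) q W := by
  refine ⟨hP, ?_⟩
  intro S hSne hqS
  by_cases hnS : none ∈ S
  · -- q must be some j
    rcases hq with rfl | rfl
    · exact absurd hnS hqS
    · refine ⟨none, hnS, lt_of_le_of_lt h0 ?_⟩
      norm_cast
      apply Finset.card_pos.2
      refine ⟨some j, ?_⟩
      simp only [Finset.mem_filter, SimpleGraph.mem_neighborFinset]
      exact ⟨wheel_adj_none j, hqS⟩
  · by_cases hjS : some j ∈ S
    · refine ⟨some j, hjS, lt_of_le_of_lt hj ?_⟩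
      norm_cast
      apply Finset.card_pos.2
      refine ⟨none, ?_⟩
      simp only [Finset.mem_filter, SimpleGraph.mem_neighborFinset]
      exact ⟨wheel_adj_some_none j, hnS⟩
    · obtain ⟨v, hv⟩ := hSne
      obtain ⟨i₀, rfl⟩ : ∃ i₀ : Fin m, v = some i₀ := by
        cases v with
        | none => exact absurd hv hnS
        | some x => exact ⟨x, rfl⟩
      obtain ⟨i, hiS, hi1S⟩ := succ_escape hv hjS
      refine ⟨some i, hiS, lt_of_le_of_lt (hrim i) ?_⟩
      have h1 : ((1:ℕ) : ℤ) = 1 := by norm_num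
      rw [← h1, Int.ofNat_lt]
      apply Finset.one_lt_card.2
      refine ⟨none, ?_, some (i + 1), ?_, by simp⟩
      · simp only [Finset.mem_filter, SimpleGraph.mem_neighborFinset]
        exact ⟨wheel_adj_some_none i, hnS⟩
      · simp only [Finset.mem_filter, SimpleGraph.mem_neighborFinset]
        exact ⟨(wheel_adj_some hm).2 (Or.inl rfl), hi1S⟩

end GaloisAux
namespace GaloisAux
open GraphDiv
open Fin.CommRing

variable {m : ℕ}

lemma wheel_fix_none (hm : 4 ≤ m) [NeZero m] (σ : wheel m ≃g wheel m) :
    σ none = none := by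
  rcases hi : σ none with _ | i
  · rfl
  · exfalso
    set t : Fin m := i + 1 + 1 with ht
    have hne : some t ≠ σ none := by
      rw [hi]
      simp only [ne_eq, Option.some_inj]
      exact fun h => fin_succ2_ne hm i h
    have hv : σ (σ.symm (some t)) = some t := σ.apply_symm_apply (some t)
    have hvne : σ.symm (some t) ≠ none := by
      intro h
      rw [h] at hv
      exact hne hv.symm
    obtain ⟨x, hx⟩ : ∃ x : Fin m, σ.symm (some t) = some x := by
      cases hxx : σ.symm (some t) with
      | none => exact absurd hxx hvne
      | some x => exact ⟨x, rfl⟩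
    have hadj : (wheel m).Adj none (some x) := wheel_adj_none x
    have : (wheel m).Adj (σ none) (σ (some x)) := σ.map_rel_iff.2 hadj
    rw [hi, ← hx, hv] at this
    rw [wheel_adj_some hm] at this
    rcases this with h | h
    · exact fin_succ_ne (i := i + 1) hm (by rw [← ht, ← h])
    · exact fin_succ3_ne hm i (by rw [ht] at h; rw [← h])

/-- The rotation automorphism of the wheel. -/
def rho (m : ℕ) (hm : 4 ≤ m) [NeZero m] : wheel m ≃g wheel m where
  toEquiv := Equiv.optionCongr (Equiv.addRight (1 : Fin m))
  map_rel_iff' := by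
    intro a b
    cases a with
    | none =>
        cases b with
        | none => simp [wheel]
        | some j => simp [wheel, Equiv.optionCongr]
    | some i =>
        cases b with
        | none => simp [wheel, Equiv.optionCongr]
        | some j =>
            show (wheel m).Adj (some (i + 1)) (some (j + 1)) ↔ _
            rw [wheel_adj_some hm, wheel_adj_some hm]
            constructor
            · rintro (h | h)
              · exact Or.inl (by
                  have : j + 1 = i + 1 + 1 := h
                  exact add_right_cancel this)
              · exact Or.inr (add_right_cancel h)
            · rintro (h | h)
              · exact Or.inl (by rw [h])
              · exact Or.inr (by rw [h])

lemma rho_some (hm : 4 ≤ m) [NeZero m] (x : Fin m) : rho m hm (some x) = some (x + 1) := rfl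

lemma rho_pow_some (hm : 4 ≤ m) [NeZero m] (k : ℕ) (x : Fin m) :
    ((rho m hm) ^ k) (some x) = some (x + (k : Fin m)) := by
  induction k generalizing x with
  | zero => simp
  | succ n ih =>
      have h2 : ((rho m hm) ^ (n + 1)) (some x) = ((rho m hm) ^ n) ((rho m hm) (some x)) := by
        rw [pow_succ]; rfl
      rw [h2, rho_some hm x, ih (x + 1)]
      congr 1
      push_cast
      ring

lemma rho_pow_one (hm : 4 ≤ m) [NeZero m] : (rho m hm) ^ m = 1 := by
  apply RelIso.ext
  intro v
  cases v with
  | none => exact wheel_fix_none hm _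
  | some x =>
      rw [rho_pow_some hm m x, Fin.natCast_self]
      simp

lemma orderOf_rho (hm : 4 ≤ m) [NeZero m] : orderOf (rho m hm) = m := by
  have h1 : orderOf (rho m hm) ∣ m := orderOf_dvd_of_pow_eq_one (rho_pow_one hm)
  have h2 : m ∣ orderOf (rho m hm) := by
    have hp : (rho m hm) ^ (orderOf (rho m hm)) = 1 := pow_orderOf_eq_one _
    have := congrArg (fun σ : wheel m ≃g wheel m => σ (some 0)) hp
    rw [rho_pow_some hm _ 0] at this
    have h0 : ((orderOf (rho m hm) : Fin m)) = 0 := by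
      have : some ((0 : Fin m) + (orderOf (rho m hm) : Fin m)) = some 0 := this
      simpa using this
    exact (Fin.natCast_eq_zero).1 h0
  exact Nat.dvd_antisymm h1 h2

/-- Every element of the rotation subgroup acts on the rim by adding a constant. -/
lemma rot_exists (hm : 4 ≤ m) [NeZero m] {σ : wheel m ≃g wheel m}
    (hσ : σ ∈ Subgroup.zpowers (rho m hm)) :
    ∃ t : Fin m, ∀ x : Fin m, σ (some x) = some (x + t) := by
  obtain ⟨z, hz⟩ := Subgroup.mem_zpowers_iff.1 hσ
  have hmod : (rho m hm) ^ (z % (m : ℤ)) = σ := by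
    rw [← hz]
    have := zpow_mod_orderOf (rho m hm) z
    rwa [orderOf_rho hm] at this
  have hnn : 0 ≤ z % (m : ℤ) :=
    Int.emod_nonneg z (Int.natCast_ne_zero.mpr (by omega))
  have hzk : (rho m hm) ^ ((z % (m : ℤ)).toNat) = σ := by
    rw [← hmod, ← zpow_natCast, Int.toNat_of_nonneg hnn]
  refine ⟨(((z % (m : ℤ)).toNat : ℕ) : Fin m), fun x => ?_⟩
  rw [← hzk, rho_pow_some hm _ x]

end GaloisAux
namespace GaloisAux
open GraphDiv
open Fin.CommRing

variable {m : ℕ}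

lemma map_edge (σ : wheel m ≃g wheel m) {e : Sym2 (Option (Fin m))}
    (he : e ∈ (wheel m).edgeSet) : Sym2.map (⇑σ) e ∈ (wheel m).edgeSet := by
  induction e using Sym2.ind with
  | _ u v =>
      rw [Sym2.map_pair_eq, SimpleGraph.mem_edgeSet] at *
      exact σ.map_rel_iff.2 he

lemma map_inv_map (σ : wheel m ≃g wheel m) (e : Sym2 (Option (Fin m))) :
    Sym2.map (⇑σ⁻¹) (Sym2.map (⇑σ) e) = e := by
  rw [Sym2.map_map]
  have h : (⇑σ⁻¹ ∘ ⇑σ) = id := funext fun x => σ.symm_apply_apply x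
  rw [h, Sym2.map_id]
  rfl

lemma rot_inv (hm : 4 ≤ m) [NeZero m] {σ : wheel m ≃g wheel m} {t : Fin m}
    (ht : ∀ x : Fin m, σ (some x) = some (x + t)) (x : Fin m) :
    (σ⁻¹) (some x) = some (x - t) := by
  have h1 := ht (x - t)
  rw [sub_add_cancel] at h1
  rw [← h1]
  exact σ.symm_apply_apply _

lemma wheel_edge_form (hm : 4 ≤ m) [NeZero m] {e : Sym2 (Option (Fin m))}
    (he : e ∈ (wheel m).edgeSet) :
    (∃ a, e = s(none, some a)) ∨ ∃ a, e = s(some a, some (a + 1)) := by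
  induction e using Sym2.ind with
  | _ u v =>
      rw [SimpleGraph.mem_edgeSet] at he
      match u, v with
      | none, none => exact absurd he ((wheel m).loopless.irrefl none)
      | none, some j => exact Or.inl ⟨j, rfl⟩
      | some i, none => exact Or.inl ⟨i, Sym2.eq_swap⟩
      | some i, some j =>
          rw [wheel_adj_some hm] at he
          rcases he with h | h
          · exact Or.inr ⟨i, by rw [h]⟩
          · exact Or.inr ⟨j, by rw [h]; exact Sym2.eq_swap⟩

lemma comm_rot (hm : 4 ≤ m) [NeZero m] {σ : wheel m ≃g wheel m}
    (hσ : σ ∈ Subgroup.zpowers (rho m hm)) (k : ℕ) :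
    ⇑σ ∘ ⇑((rho m hm) ^ k) = ⇑((rho m hm) ^ k) ∘ ⇑σ := by
  obtain ⟨t, ht⟩ := rot_exists hm hσ
  funext x
  cases x with
  | none =>
      simp only [Function.comp_apply]
      rw [wheel_fix_none hm σ, wheel_fix_none hm ((rho m hm) ^ k),
        wheel_fix_none hm σ]
  | some x =>
      simp only [Function.comp_apply]
      rw [rho_pow_some hm k x, ht, ht, rho_pow_some hm k]
      congr 1
      ring

lemma count_one (hm : 4 ≤ m) [NeZero m] {Δ : Subgroup (wheel m ≃g wheel m)}
    (hΔ : Δ ≤ Subgroup.zpowers (rho m hm)) (i : Fin m) {e₁ : Sym2 (Option (Fin m))}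
    (he₁ : e₁ ∈ (wheel m).edgeSet)
    (hyp : ∃ σ ∈ Δ, some i ∈ Sym2.map (⇑σ) e₁) (hnc : ¬ Collapsed Δ e₁) :
    Nat.card {e : Sym2 (Option (Fin m)) // e ∈ (wheel m).edgeSet ∧ some i ∈ e ∧
      ∃ σ ∈ Δ, Sym2.map (⇑σ) e = e₁} = 1 := by
  obtain ⟨σ₀, hσ₀Δ, hσ₀⟩ := hyp
  obtain ⟨t₀, ht₀⟩ := rot_exists hm (hΔ hσ₀Δ)
  rcases wheel_edge_form hm he₁ with ⟨a, rfl⟩ | ⟨a, rfl⟩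
  · -- spoke case
    have hmap : Sym2.map (⇑σ₀) s(none, some a) = s(none, some (a + t₀)) := by
      rw [Sym2.map_pair_eq, wheel_fix_none hm σ₀, ht₀]
    rw [hmap] at hσ₀
    have hia : i = a + t₀ := by
      rcases Sym2.mem_iff.1 hσ₀ with h | h
      · exact absurd h (by simp)
      · exact Option.some_inj.1 h
    have claim : ∀ e : Sym2 (Option (Fin m)),
        (∃ σ ∈ Δ, Sym2.map (⇑σ) e = s(none, some a)) →
        some i ∈ e → e = s(none, some i) := by
      rintro e ⟨σ, hσΔ, hmape⟩ hie
      obtain ⟨t, ht⟩ := rot_exists hm (hΔ hσΔ)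
      have he' : e = s(none, some (a - t)) := by
        rw [← map_inv_map σ e, hmape, Sym2.map_pair_eq,
          wheel_fix_none hm σ⁻¹, rot_inv hm ht]
      rw [he'] at hie ⊢
      rcases Sym2.mem_iff.1 hie with h | h
      · exact absurd h (by simp)
      · rw [Option.some_inj.1 h]
    have hx : s(none, some i) ∈ (wheel m).edgeSet ∧ some i ∈ s(none, some i) ∧
        ∃ σ ∈ Δ, Sym2.map (⇑σ) s(none, some i) = s(none, some a) := by
      refine ⟨(SimpleGraph.mem_edgeSet (wheel m)).2 (wheel_adj_none i), by simp, σ₀⁻¹, inv_mem hσ₀Δ, ?_⟩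
      rw [Sym2.map_pair_eq, wheel_fix_none hm σ₀⁻¹, rot_inv hm ht₀, hia,
        add_sub_cancel_right]
    rw [Nat.card_eq_one_iff_unique]
    refine ⟨⟨fun x y => Subtype.ext ?_⟩, ⟨⟨s(none, some i), hx⟩⟩⟩
    rw [claim x.1 x.2.2.2 x.2.2.1, claim y.1 y.2.2.2 y.2.2.1]
  · -- rim case
    have hmap : Sym2.map (⇑σ₀) s(some a, some (a + 1)) =
        s(some (a + t₀), some (a + 1 + t₀)) := by
      rw [Sym2.map_pair_eq, ht₀, ht₀]
    rw [hmap] at hσ₀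
    have claim : ∀ e : Sym2 (Option (Fin m)),
        (∃ σ ∈ Δ, Sym2.map (⇑σ) e = s(some a, some (a + 1))) → some i ∈ e →
        (e = s(some i, some (i + 1)) ∧ ∃ σ ∈ Δ, σ (some i) = some a) ∨
        (e = s(some (i - 1), some i) ∧ ∃ σ ∈ Δ, σ (some i) = some (a + 1)) := by
      rintro e ⟨σ, hσΔ, hmape⟩ hie
      obtain ⟨t, ht⟩ := rot_exists hm (hΔ hσΔ)
      have he' : e = s(some (a - t), some (a + 1 - t)) := by
        rw [← map_inv_map σ e, hmape, Sym2.map_pair_eq, rot_inv hm ht, rot_inv hm ht]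
      rw [he'] at hie ⊢
      rcases Sym2.mem_iff.1 hie with h | h
      · left
        have hi : a - t = i := (Option.some_inj.1 h).symm
        constructor
        · rw [← hi]
          congr 2
          ring
        · refine ⟨σ, hσΔ, ?_⟩
          rw [ht, ← hi]
          congr 1
          ring
      · right
        have hi : a + 1 - t = i := (Option.some_inj.1 h).symm
        constructor
        · rw [← hi]
          congr 2
          ring
        · refine ⟨σ, hσΔ, ?_⟩
          rw [ht, ← hi]
          congr 1
          ring
    have collide : (∃ σ ∈ Δ, σ (some i) = some a) →
        (∃ σ ∈ Δ, σ (some i) = some (a + 1)) → False := by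
      rintro ⟨σ₁, h1, ha⟩ ⟨σ₂, h2, hb⟩
      apply hnc
      refine ⟨some a, some (a + 1), rfl, σ₂ * σ₁⁻¹, mul_mem h2 (inv_mem h1), ?_⟩
      show σ₂ ((σ₁⁻¹) (some a)) = some (a + 1)
      have h3 : (σ₁⁻¹) (some a) = some i := by
        rw [← ha]
        exact σ₁.symm_apply_apply _
      rw [h3, hb]
    have hne : Nonempty {e : Sym2 (Option (Fin m)) // e ∈ (wheel m).edgeSet ∧
        some i ∈ e ∧ ∃ σ ∈ Δ, Sym2.map (⇑σ) e = s(some a, some (a + 1))} := by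
      rcases Sym2.mem_iff.1 hσ₀ with h | h
      · have hi : a + t₀ = i := (Option.some_inj.1 h).symm
        refine ⟨⟨s(some i, some (i + 1)),
          (SimpleGraph.mem_edgeSet (wheel m)).2 ((wheel_adj_some hm).2 (Or.inl rfl)),
          by simp, σ₀⁻¹, inv_mem hσ₀Δ, ?_⟩⟩
        rw [Sym2.map_pair_eq, rot_inv hm ht₀, rot_inv hm ht₀, ← hi]
        congr 3
        · ring
        · ring
      · have hi : a + 1 + t₀ = i := (Option.some_inj.1 h).symm
        refine ⟨⟨s(some (i - 1), some i),
          (SimpleGraph.mem_edgeSet (wheel m)).2 ((wheel_adj_some hm).2 (Or.inl (sub_add_cancel i 1).symm)),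
          by simp, σ₀⁻¹, inv_mem hσ₀Δ, ?_⟩⟩
        rw [Sym2.map_pair_eq, rot_inv hm ht₀, rot_inv hm ht₀, ← hi]
        congr 3
        · ring
        · ring
    rw [Nat.card_eq_one_iff_unique]
    refine ⟨⟨fun x y => Subtype.ext ?_⟩, hne⟩
    rcases claim x.1 x.2.2.2 x.2.2.1 with ⟨hx1, hxw⟩ | ⟨hx1, hxw⟩ <;>
      rcases claim y.1 y.2.2.2 y.2.2.1 with ⟨hy1, hyw⟩ | ⟨hy1, hyw⟩
    · rw [hx1, hy1]
    · exact absurd (collide hxw hyw) (by simp)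
    · exact absurd (collide hyw hxw) (by simp)
    · rw [hx1, hy1]

end GaloisAux
namespace GaloisAux
open GraphDiv
open Fin.CommRing

variable {m : ℕ}

lemma hub_step (hm : 4 ≤ m) [NeZero m] {Δ : Subgroup (wheel m ≃g wheel m)}
    (hΔ : Δ ≤ Subgroup.zpowers (rho m hm)) (b c : Fin m) (e : Sym2 (Option (Fin m)))
    (h : e ∈ (wheel m).edgeSet ∧ (none : Option (Fin m)) ∈ e ∧
      ∃ σ ∈ Δ, Sym2.map (⇑σ) e = s(none, some b)) :
    Sym2.map (⇑((rho m hm) ^ (c - b).val)) e ∈ (wheel m).edgeSet ∧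
      (none : Option (Fin m)) ∈ Sym2.map (⇑((rho m hm) ^ (c - b).val)) e ∧
      ∃ σ ∈ Δ, Sym2.map (⇑σ) (Sym2.map (⇑((rho m hm) ^ (c - b).val)) e) = s(none, some c) := by
  obtain ⟨he, hne, σ, hσΔ, hmape⟩ := h
  set τ := (rho m hm) ^ (c - b).val with hτ
  have hτnone : τ none = none := wheel_fix_none hm τ
  have hτsome : ∀ x : Fin m, τ (some x) = some (x + (c - b)) := by
    intro x
    rw [hτ, rho_pow_some hm _ x, Fin.cast_val_eq_self]
  refine ⟨map_edge τ he, Sym2.mem_map.2 ⟨none, hne, hτnone⟩, σ, hσΔ, ?_⟩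
  rw [Sym2.map_map, comm_rot hm (hΔ hσΔ) ((c - b).val), ← Sym2.map_map, hmape,
    Sym2.map_pair_eq]
  rw [hτnone, hτsome b]
  congr 2
  ring

lemma hub_count (hm : 4 ≤ m) [NeZero m] {Δ : Subgroup (wheel m ≃g wheel m)}
    (hΔ : Δ ≤ Subgroup.zpowers (rho m hm)) (a₁ a₂ : Fin m) :
    Nat.card {e : Sym2 (Option (Fin m)) // e ∈ (wheel m).edgeSet ∧
      (none : Option (Fin m)) ∈ e ∧ ∃ σ ∈ Δ, Sym2.map (⇑σ) e = s(none, some a₁)} =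
    Nat.card {e : Sym2 (Option (Fin m)) // e ∈ (wheel m).edgeSet ∧
      (none : Option (Fin m)) ∈ e ∧ ∃ σ ∈ Δ, Sym2.map (⇑σ) e = s(none, some a₂)} := by
  apply Nat.card_congr
  have cancel : ∀ (b c : Fin m) (e : Sym2 (Option (Fin m))),
      Sym2.map (⇑((rho m hm) ^ (b - c).val)) (Sym2.map (⇑((rho m hm) ^ (c - b).val)) e) = e := by
    intro b c e
    rw [Sym2.map_map]
    have h : (⇑((rho m hm) ^ (b - c).val) ∘ ⇑((rho m hm) ^ (c - b).val)) = id := by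
      funext x
      cases x with
      | none =>
          simp only [Function.comp_apply, id_eq]
          rw [wheel_fix_none hm, wheel_fix_none hm]
      | some x =>
          simp only [Function.comp_apply, id_eq]
          rw [rho_pow_some hm _ x, Fin.cast_val_eq_self, rho_pow_some hm,
            Fin.cast_val_eq_self]
          congr 1
          ring
    rw [h, Sym2.map_id]
    rfl
  exact
    { toFun := fun x => ⟨Sym2.map (⇑((rho m hm) ^ (a₂ - a₁).val)) x.1,
        hub_step hm hΔ a₁ a₂ x.1 x.2⟩
      invFun := fun y => ⟨Sym2.map (⇑((rho m hm) ^ (a₁ - a₂).val)) y.1,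
        hub_step hm hΔ a₂ a₁ y.1 y.2⟩
      left_inv := fun x => Subtype.ext (cancel a₁ a₂ x.1)
      right_inv := fun y => Subtype.ext (cancel a₂ a₁ y.1) }

lemma quot_harm (hm : 4 ≤ m) [NeZero m] {Δ : Subgroup (wheel m ≃g wheel m)}
    (hΔ : Δ ≤ Subgroup.zpowers (rho m hm)) : QuotHarmonic (wheel m) Δ := by
  intro P e₁ e₂ he₁ he₂ hyp₁ hyp₂ hnc₁ hnc₂
  cases P with
  | some i => rw [count_one hm hΔ i he₁ hyp₁ hnc₁, count_one hm hΔ i he₂ hyp₂ hnc₂]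
  | none =>
      have spoke : ∀ e : Sym2 (Option (Fin m)), e ∈ (wheel m).edgeSet →
          (∃ σ ∈ Δ, (none : Option (Fin m)) ∈ Sym2.map (⇑σ) e) →
          ∃ a, e = s(none, some a) := by
        rintro e he ⟨σ, hσΔ, hne⟩
        obtain ⟨z, hz, hzz⟩ := Sym2.mem_map.1 hne
        have hznone : z = none := by
          apply σ.toEquiv.injective
          show σ z = σ none
          rw [hzz, wheel_fix_none hm σ]
        rcases wheel_edge_form hm he with ⟨a, rfl⟩ | ⟨a, rfl⟩
        · exact ⟨a, rfl⟩
        · exfalso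
          rw [hznone] at hz
          rcases Sym2.mem_iff.1 hz with h | h <;> exact nomatch h
      obtain ⟨a₁, rfl⟩ := spoke e₁ he₁ hyp₁
      obtain ⟨a₂, rfl⟩ := spoke e₂ he₂ hyp₂
      exact hub_count hm hΔ a₁ a₂

lemma harmonic_rho (hm : 4 ≤ m) [NeZero m] :
    HarmonicAction (wheel m) (Subgroup.zpowers (rho m hm)) :=
  fun _ hΔ => quot_harm hm hΔ

end GaloisAux
namespace GaloisAux
open GraphDiv
open Fin.CommRing

variable {m : ℕ}

lemma lap_zero {V : Type*} (G : SimpleGraph V) [Fintype V] :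
    lap G (fun _ => (0 : ℤ)) = 0 := by
  funext P
  unfold lap
  simp

lemma unit_self {V : Type*} (P : V) : unit P P = 1 := by simp [unit]

lemma unit_ne {V : Type*} {P Q : V} (h : Q ≠ P) : unit P Q = 0 := by simp [unit, h]

/-- indicator of the hub -/
noncomputable def chiN (m : ℕ) : Option (Fin m) → ℤ := fun v => if v = none then 1 else 0

/-- indicator of a rim vertex -/
noncomputable def chiS (s : Fin m) : Option (Fin m) → ℤ := fun v => if v = some s then 1 else 0

lemma lap_chiN_none (hm : 4 ≤ m) [NeZero m] : lap (wheel m) (chiN m) none = m := by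
  rw [lap_wheel_none hm]
  simp [chiN]

lemma lap_chiN_some (hm : 4 ≤ m) [NeZero m] (j : Fin m) :
    lap (wheel m) (chiN m) (some j) = -1 := by
  rw [lap_wheel_some hm]
  simp [chiN]

lemma lap_chiS_none (hm : 4 ≤ m) [NeZero m] (s : Fin m) :
    lap (wheel m) (chiS s) none = -1 := by
  rw [lap_wheel_none hm]
  simp [chiS, Finset.sum_ite_eq']

lemma lap_chiS_some (hm : 4 ≤ m) [NeZero m] (s j : Fin m) :
    lap (wheel m) (chiS s) (some j) =
      3 * (if j = s then (1 : ℤ) else 0) - (if j + 1 = s then (1 : ℤ) else 0)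
        - (if j - 1 = s then (1 : ℤ) else 0) := by
  rw [lap_wheel_some hm]
  simp [chiS]

lemma fin_pred_ne (hm : 4 ≤ m) [NeZero m] (i : Fin m) : i - 1 ≠ i := by
  intro h
  have : i + 1 = i := by
    conv_lhs => rw [← h]
    rw [sub_add_cancel]
  exact fin_succ_ne hm i this

end GaloisAux
namespace GaloisAux
open GraphDiv
open Fin.CommRing

variable {m : ℕ}

/-- Nonemptiness of linear systems of hub-based divisors. -/
lemma hub_nonempty (hm : 4 ≤ m) [NeZero m] {X : Option (Fin m) → ℤ}
    (h : (0 ≤ X none ∧ ∀ x, 0 ≤ X (some x)) ∨ (-1 ≤ X none ∧ ∀ x, 1 ≤ X (some x))) :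
    (linSys (wheel m) X).Nonempty := by
  rcases h with ⟨h0, hrim⟩ | ⟨h0, hrim⟩
  · exact linSys_nonempty_of _ X (fun _ => 0) (by
      rw [lap_zero]
      intro v
      simp only [Pi.add_apply, Pi.zero_apply, add_zero]
      cases v with
      | none => exact h0
      | some x => exact hrim x)
  · refine linSys_nonempty_of _ X (chiN m) ?_
    intro v
    simp only [Pi.add_apply]
    cases v with
    | none =>
        rw [lap_chiN_none hm]
        have h4 : (4 : ℤ) ≤ m := by exact_mod_cast hm
        linarith
    | some x =>
        rw [lap_chiN_some hm]
        have := hrim x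
        linarith

lemma rank_hub_lower (hm : 4 ≤ m) [NeZero m] :
    ∀ E : Option (Fin m) → ℤ, Effective E → degDiv E ≤ 1 →
      (linSys (wheel m) (((fun _ => 1) - unit none) - E)).Nonempty := by
  intro E hE hdeg
  have hd0 : 0 ≤ degDiv E := degDiv_nonneg hE
  rcases eq_or_lt_of_le hd0 with hd | hd
  · have hE0 : E = 0 := eff_zero hE (by omega)
    subst hE0
    apply hub_nonempty hm
    left
    constructor
    · simp [unit_self]
    · intro x
      simp [unit_ne (by simp : (some x : Option (Fin m)) ≠ none)]
  · have hd1 : degDiv E = 1 := by omega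
    obtain ⟨R, rfl⟩ := eff_unit hE hd1
    apply hub_nonempty hm
    cases R with
    | none =>
        right
        constructor
        · simp [unit_self]
        · intro x
          have h1 : unit (none : Option (Fin m)) (some x) = 0 := unit_ne (by simp)
          simp only [Pi.sub_apply, h1]
          norm_num
    | some r =>
        left
        constructor
        · simp [unit_self, unit_ne (by simp : (none : Option (Fin m)) ≠ some r)]
        · intro x
          have h1 : unit (none : Option (Fin m)) (some x) = 0 := unit_ne (by simp)
          simp only [Pi.sub_apply, h1]
          rcases eq_or_ne x r with rfl | hxr
          · rw [unit_self]; norm_num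
          · rw [unit_ne (by simpa using hxr)]; norm_num

lemma rank_hub (hm : 4 ≤ m) [NeZero m] :
    RankEq (wheel m) ((fun _ => 1) - unit none) 1 := by
  refine ⟨by norm_num, rank_hub_lower hm, ?_⟩
  refine ⟨fun v => if v = some 0 then 2 else 0, ?_, ?_, ?_⟩
  · intro P
    by_cases h : P = some 0 <;> simp [h]
  · simp [degDiv, Finset.sum_ite_eq']
  · set W := ((fun _ => 1) - unit none - fun v => if v = some 0 then 2 else 0 :
      Option (Fin m) → ℤ) with hW
    have hWn : W none = 0 := by
      simp [hW, unit_self]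
    have hWs : ∀ x : Fin m, W (some x) = if x = 0 then -1 else 1 := by
      intro x
      have h1 : unit (none : Option (Fin m)) (some x) = 0 := unit_ne (by simp)
      simp only [hW, Pi.sub_apply, h1, sub_zero, Option.some_inj]
      split <;> norm_num
    apply linSys_empty
    · refine wheel_qreduced hm 0 (Or.inr rfl) (by omega) ?_ ?_ ?_
      · intro x
        rw [hWs x]
        split <;> norm_num
      · rw [hWs 0, if_pos rfl]; norm_num
      · intro P hP
        cases P with
        | none => omega
        | some x =>
            rw [hWs x, if_neg (by simpa using hP)]
            norm_num
    · rw [hWs 0, if_pos rfl]; norm_num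

lemma rank_hub2 (hm : 4 ≤ m) [NeZero m] (Q : Option (Fin m)) :
    RankEq (wheel m) ((fun _ => 1) - unit none - unit Q) 0 := by
  refine ⟨by norm_num, ?_, ?_⟩
  · intro E hE hdeg
    have hE0 : E = 0 := eff_zero hE hdeg
    subst hE0
    apply hub_nonempty hm
    cases Q with
    | none =>
        right
        constructor
        · simp only [Pi.sub_apply, Pi.zero_apply, unit_self, sub_zero]
          norm_num
        · intro x
          simp only [Pi.sub_apply, Pi.zero_apply, sub_zero,
            unit_ne (by simp : (some x : Option (Fin m)) ≠ none)]
          norm_num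
    | some q =>
        left
        constructor
        · simp only [Pi.sub_apply, Pi.zero_apply, unit_self, sub_zero]
          rw [unit_ne (by simp : (none : Option (Fin m)) ≠ some q)]; norm_num
        · intro x
          simp only [Pi.sub_apply, Pi.zero_apply, sub_zero,
            unit_ne (by simp : (some x : Option (Fin m)) ≠ none)]
          rcases eq_or_ne x q with rfl | hxq
          · rw [unit_self]; norm_num
          · rw [unit_ne (by simpa using hxq)]; norm_num
  · -- the empty linear system witness
    cases Q with
    | none =>
        refine ⟨unit (some 0), ?_, by rw [degDiv_unit]; norm_num, ?_⟩
        · intro P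
          by_cases h : P = some 0 <;> simp [unit, h]
        · set W := ((fun _ => 1) - unit none - unit none - unit (some 0) :
            Option (Fin m) → ℤ) with hW
          have hWn : W none = -1 := by
            simp [hW, unit_self, unit_ne (by simp : (none : Option (Fin m)) ≠ some 0)]
          have hWs : ∀ x : Fin m, W (some x) = if x = 0 then 0 else 1 := by
            intro x
            have h1 : unit (none : Option (Fin m)) (some x) = 0 := unit_ne (by simp)
            rcases eq_or_ne x 0 with rfl | hx
            · simp [hW, h1, unit_self]
            · simp [hW, h1, hx, unit_ne (by simpa using hx : (some x : Option (Fin m)) ≠ some 0)]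
          apply linSys_empty
          · refine wheel_qreduced hm 0 (Or.inl rfl) (by omega) ?_ ?_ ?_
            · intro x
              rw [hWs x]; split <;> norm_num
            · rw [hWs 0, if_pos rfl]
            · intro P hP
              cases P with
              | none => exact absurd rfl hP
              | some x =>
                  rw [hWs x]; split <;> norm_num
          · omega
    | some q =>
        refine ⟨unit (some q), ?_, by rw [degDiv_unit]; norm_num, ?_⟩
        · intro P
          by_cases h : P = some q <;> simp [unit, h]
        · set W := ((fun _ => 1) - unit none - unit (some q) - unit (some q) :
            Option (Fin m) → ℤ) with hW
          have hWn : W none = 0 := by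
            simp [hW, unit_self, unit_ne (by simp : (none : Option (Fin m)) ≠ some q)]
          have hWs : ∀ x : Fin m, W (some x) = if x = q then -1 else 1 := by
            intro x
            have h1 : unit (none : Option (Fin m)) (some x) = 0 := unit_ne (by simp)
            rcases eq_or_ne x q with rfl | hx
            · simp [hW, h1, unit_self]
            · simp [hW, h1, hx, unit_ne (by simpa using hx : (some x : Option (Fin m)) ≠ some q)]
          apply linSys_empty
          · refine wheel_qreduced hm q (Or.inr rfl) (by omega) ?_ ?_ ?_
            · intro x
              rw [hWs x]; split <;> norm_num
            · rw [hWs q, if_pos rfl]; norm_num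
            · intro P hP
              cases P with
              | none => omega
              | some x =>
                  rw [hWs x, if_neg (by simpa using hP)]
                  norm_num
          · rw [hWs q, if_pos rfl]; norm_num

end GaloisAux
namespace GaloisAux
open GraphDiv
open Fin.CommRing

variable {m : ℕ}

lemma symm_some (hm : 4 ≤ m) [NeZero m] (σ : wheel m ≃g wheel m) (x : Fin m) :
    ∃ y, σ.symm (some x) = some y := by
  cases h : σ.symm (some x) with
  | none =>
      exfalso
      have := congrArg σ h
      rw [RelIso.apply_symm_apply, wheel_fix_none hm σ] at this
      exact nomatch this
  | some y => exact ⟨y, rfl⟩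

lemma symm_none (hm : 4 ≤ m) [NeZero m] (σ : wheel m ≃g wheel m) :
    σ.symm none = none := wheel_fix_none hm σ.symm

lemma galois_none (hm : 4 ≤ m) [NeZero m] :
    IsGaloisPoint (wheel m) (fun _ => 1) none := by
  refine ⟨rank_hub hm, rank_hub2 hm, Subgroup.zpowers (rho m hm), ?_, ?_,
    harmonic_rho hm, ?_⟩
  · rw [Nat.card_zpowers, orderOf_rho hm]
    have hdeg : degDiv (fun _ : Option (Fin m) => (1 : ℤ)) = (m : ℤ) + 1 := by
      simp [degDiv, Finset.card_univ]
    rw [hdeg]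
    ring
  · refine ⟨none, some 0, ?_⟩
    rintro ⟨σ, hσ, h⟩
    rw [wheel_fix_none hm σ] at h
    exact nomatch h
  · refine ⟨fun v => if v = none then 0 else 1, fun v => if v = none then (m : ℤ) else 0,
      ?_, ⟨?_, ?_⟩, ⟨?_, ?_⟩, ?_⟩
    · intro h
      have h0 := congrFun h none
      rw [if_pos rfl, if_pos rfl] at h0
      have h4 : (4 : ℤ) ≤ m := by exact_mod_cast hm
      omega
    · intro P
      by_cases h : P = none <;> simp [h]
    · refine ⟨fun _ => 0, ?_⟩
      rw [lap_zero]
      funext v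
      cases v with
      | none => simp [unit_self]
      | some x => simp [unit_ne (by simp : (some x : Option (Fin m)) ≠ none)]
    · intro P
      by_cases h : P = none <;> simp [h]
    · refine ⟨chiN m, ?_⟩
      funext v
      cases v with
      | none =>
          simp only [Pi.sub_apply, lap_chiN_none hm, unit_self, if_pos rfl]
          norm_num
      | some x =>
          simp only [Pi.sub_apply, lap_chiN_some hm,
            unit_ne (by simp : (some x : Option (Fin m)) ≠ none),
            if_neg (by simp : (some x : Option (Fin m)) ≠ none)]
          norm_num
    · intro σ hσ
      constructor <;> funext v <;> cases v with
      | none => simp only [divAct, symm_none hm σ]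
      | some x =>
          obtain ⟨y, hy⟩ := symm_some hm σ x
          simp only [divAct, hy]
          simp

lemma rim_nonempty (hm : 4 ≤ m) [NeZero m] (i : Fin m) (R : Option (Fin m)) :
    (linSys (wheel m)
      ((fun _ => 1) - unit (some i) - unit (some (i + 1 + 1)) - unit R)).Nonempty := by
  obtain ⟨k, hk⟩ : ∃ k : Fin m, k = i + 1 + 1 := ⟨_, rfl⟩
  rw [← hk]
  have hik : i ≠ k := by
    rw [hk]
    exact fun h => fin_succ2_ne hm i h.symm
  have hki : k ≠ i := by
    rw [hk]
    exact fin_succ2_ne hm i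
  have hu : ∀ a b : Fin m, unit (some a : Option (Fin m)) (some b) =
      if b = a then (1 : ℤ) else 0 := by
    intro a b
    rcases eq_or_ne b a with rfl | h
    · simp [unit_self]
    · simp [unit_ne (by simpa using h : (some b : Option (Fin m)) ≠ some a), h]
  have huN : ∀ a : Fin m, unit (some a : Option (Fin m)) none = 0 := fun a =>
    unit_ne (by simp)
  have hsp : ∀ j x : Fin m, j + 1 = x → j - 1 = x → False := by
    intro j x h1 h2
    exact fin_succ_ne_pred hm j (by rw [h1, h2])
  cases R with
  | none =>
      refine linSys_nonempty_of _ _ (fun _ => 0) ?_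
      rw [lap_zero]
      intro v
      simp only [Pi.add_apply, Pi.zero_apply, add_zero, Pi.sub_apply]
      cases v with
      | none => rw [huN, huN, unit_self]; norm_num
      | some j =>
          rw [hu, hu, unit_ne (by simp : (some j : Option (Fin m)) ≠ none)]
          rcases eq_or_ne j i with hji | hji
          · rw [if_pos hji, if_neg (show j ≠ k by rw [hji]; exact hik)]
            norm_num
          · rw [if_neg hji]
            split <;> norm_num
  | some r =>
      rcases eq_or_ne r i with hri | hri
      · -- R = some i
        rw [hri]
        refine linSys_nonempty_of _ _ (chiS i) ?_
        intro v
        simp only [Pi.add_apply, Pi.sub_apply]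
        cases v with
        | none =>
            rw [lap_chiS_none hm, huN, huN]
            norm_num
        | some j =>
            rw [lap_chiS_some hm, hu, hu]
            rcases eq_or_ne j i with hji | hji
            · rw [if_pos hji, if_neg (show j ≠ k by rw [hji]; exact hik),
                if_neg (show j + 1 ≠ i by rw [hji]; exact fin_succ_ne hm i),
                if_neg (show j - 1 ≠ i by rw [hji]; exact fin_pred_ne hm i)]
              norm_num
            · rw [if_neg hji]
              rcases eq_or_ne j k with hjk | hjk
              · have c1 : j + 1 ≠ i := by
                  rw [hjk, hk]
                  exact fun h => fin_succ3_ne hm i h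
                have c2 : j - 1 ≠ i := by
                  rw [hjk, hk]
                  intro h
                  have h3 : i + 1 + 1 - 1 = i + 1 := by ring
                  rw [h3] at h
                  exact fin_succ_ne hm i h
                rw [if_pos hjk, if_neg c1, if_neg c2]
                norm_num
              · rw [if_neg hjk]
                rcases eq_or_ne (j + 1) i with h1 | h1
                · rw [if_pos h1, if_neg (fun h2 => hsp j i h1 h2)]
                  norm_num
                · rw [if_neg h1]
                  split <;> norm_num
      · rcases eq_or_ne r k with hrk | hrk
        · -- R = some k
          rw [hrk]
          refine linSys_nonempty_of _ _ (chiS k) ?_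
          intro v
          simp only [Pi.add_apply, Pi.sub_apply]
          cases v with
          | none =>
              rw [lap_chiS_none hm, huN, huN]
              norm_num
          | some j =>
              rw [lap_chiS_some hm, hu, hu]
              rcases eq_or_ne j k with hjk | hjk
              · rw [if_pos hjk, if_neg (show j ≠ i by rw [hjk]; exact hki),
                  if_neg (show j + 1 ≠ k by rw [hjk]; exact fin_succ_ne hm k),
                  if_neg (show j - 1 ≠ k by rw [hjk]; exact fin_pred_ne hm k)]
                norm_num
              · rw [if_neg hjk]
                rcases eq_or_ne j i with hji | hji
                · have c1 : j + 1 ≠ k := by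
                    rw [hji, hk]
                    intro h
                    exact fin_succ_ne hm (i + 1) h.symm
                  have c2 : j - 1 ≠ k := by
                    rw [hji, hk]
                    intro h
                    have h3 : i = i + 1 + 1 + 1 := by
                      conv_lhs => rw [← sub_add_cancel i 1, h]
                    exact fin_succ3_ne hm i h3.symm
                  rw [if_pos hji, if_neg c1, if_neg c2]
                  norm_num
                · rw [if_neg hji]
                  rcases eq_or_ne (j + 1) k with h1 | h1
                  · rw [if_pos h1, if_neg (fun h2 => hsp j k h1 h2)]
                    norm_num
                  · rw [if_neg h1]
                    split <;> norm_num
        · -- R = some r with r ∉ {i, k}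
          refine linSys_nonempty_of _ _ (fun _ => 0) ?_
          rw [lap_zero]
          intro v
          simp only [Pi.add_apply, Pi.zero_apply, add_zero, Pi.sub_apply]
          cases v with
          | none => rw [huN, huN, huN]; norm_num
          | some j =>
              rw [hu, hu, hu]
              rcases eq_or_ne j i with hji | hji
              · rw [if_pos hji, if_neg (show j ≠ k by rw [hji]; exact hik),
                  if_neg (show j ≠ r by rw [hji]; exact fun h => hri h.symm)]
                norm_num
              · rw [if_neg hji]
                rcases eq_or_ne j k with hjk | hjk
                · rw [if_pos hjk, if_neg (show j ≠ r by rw [hjk]; exact fun h => hrk h.symm)]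
                  norm_num
                · rw [if_neg hjk]
                  split <;> norm_num

lemma rim_not (hm : 4 ≤ m) [NeZero m] (i : Fin m) :
    ¬ IsGaloisPoint (wheel m) (fun _ => 1) (some i) := by
  rintro ⟨-, h2, -⟩
  obtain ⟨-, -, E, hEeff, hdeg, hempty⟩ := h2 (some (i + 1 + 1))
  obtain ⟨R, rfl⟩ := eff_unit hEeff (by omega)
  obtain ⟨x, hx⟩ := rim_nonempty hm i R
  rw [hempty] at hx
  exact hx

end GaloisAux

open GraphDiv in
/-- On the wheel `W_n` (`n = m + 1 ≥ 5`), the hub is a Galois point with respect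
to `|P₁ + ⋯ + Pₙ|` and no rim vertex is; in particular there is exactly one
Galois point. -/
theorem stmt14 (m : ℕ) (hm : 4 ≤ m) :
    IsGaloisPoint (wheel m) (fun _ => 1) none ∧
    ∀ i : Fin m, ¬ IsGaloisPoint (wheel m) (fun _ => 1) (some i) := by
  haveI : NeZero m := ⟨by omega⟩
  exact ⟨GaloisAux.galois_none hm, fun i => GaloisAux.rim_not hm i⟩
end
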